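/- arXiv:1410.6590 — 13 statements merged into one kernel-verified Lean document; each statement's English description precedes it below -/
import Mathlib

section
/- Let F be a finite subset of ℝ × ℝ and let Λ be a finite subset of the positive reals. Then the set S = { λ * (2 - x) : λ ∈ Λ, x ∈ ℝ, 0 ≤ x ≤ 1, and there exist (c,d) ∈ F and an integer m with m > d and x = (m - c)/(m - d) } satisfies ACC. (This is the computational core of Lemma 3(2) of the paper: there the codiscrepancy coefficient is α₀ = (m - 2 - a₁b₁ - ... - a_pb_p)/(m - a₁² - ... - a_p²) ∈ [0,1] with the aᵢ, bⱼ ranging over finite sets of reals and m a positive integer, and the minimal intersection numbers have the form λ(2 - α₀) with λ in a finite set of positive rationals.) -/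
/-- A set `S ⊆ ℝ` satisfies the ascending chain condition: there is no strictly
increasing sequence of elements of `S`. -/
def SatisfiesACC (S : Set ℝ) : Prop :=
  ¬ ∃ f : ℕ → ℝ, StrictMono f ∧ ∀ n, f n ∈ S

/-- The computational core of Lemma 3(2): for a finite set `F ⊆ ℝ × ℝ` and a finite set
`Λ` of positive reals, the set of all numbers `λ * (2 - x)` with `λ ∈ Λ` and
`x = (m - c)/(m - d) ∈ [0,1]` for some `(c, d) ∈ F` and some integer `m > d`
satisfies the ascending chain condition. -/
theorem acc_of_lambda_mul_two_sub (F : Finset (ℝ × ℝ)) (Λ : Finset ℝ)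
    (hΛ : ∀ l ∈ Λ, 0 < l) :
    SatisfiesACC { y : ℝ | ∃ l ∈ Λ, ∃ x : ℝ, 0 ≤ x ∧ x ≤ 1 ∧
      (∃ p ∈ F, ∃ m : ℤ, p.2 < (m : ℝ) ∧ x = ((m : ℝ) - p.1) / ((m : ℝ) - p.2)) ∧
      y = l * (2 - x) } := by
  classical
  rintro ⟨f, hf, hmem⟩
  simp only [Set.mem_setOf_eq] at hmem
  choose l hl x hx0 hx1 hpd hy using hmem
  choose p hp m hm hxeq using hpd
  -- pigeonhole
  have hg : ∀ n, (l n, p n) ∈ Λ ×ˢ F := fun n => Finset.mem_product.mpr ⟨hl n, hp n⟩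
  obtain ⟨y0, hy0⟩ := Finite.exists_infinite_fiber (fun n => (⟨(l n, p n), hg n⟩ : ↥(Λ ×ˢ F)))
  set s : Set ℕ := (fun n => (⟨(l n, p n), hg n⟩ : ↥(Λ ×ˢ F))) ⁻¹' {y0} with hs
  haveI : Infinite s := hy0
  let e : ℕ ↪o ℕ := Nat.orderEmbeddingOfSet s
  have he : ∀ k, e k ∈ s := fun k => by
    have := Nat.orderEmbeddingOfSet_range s
    exact this ▸ Set.mem_range_self k
  -- along e, l and p are constant
  have hlp : ∀ j k, l (e j) = l (e k) ∧ p (e j) = p (e k) := by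
    intro j k
    have hj := he j; have hk := he k
    simp only [hs, Set.mem_preimage, Set.mem_singleton_iff] at hj hk
    have := hj.trans hk.symm
    have := Subtype.ext_iff.mp this
    exact ⟨congrArg Prod.fst this, congrArg Prod.snd this⟩
  set c := (p (e 0)).1
  set d := (p (e 0)).2
  have hlpos : 0 < l (e 0) := hΛ _ (hl _)
  -- x along e is strictly decreasing
  have hxanti : StrictAnti (fun k => x (e k)) := by
    intro j k hjk
    have hfjk : f (e j) < f (e k) := hf (e.strictMono hjk)
    rw [hy (e j), hy (e k), (hlp j k).1] at hfjk
    have := (mul_lt_mul_iff_right₀ (hΛ _ (hl (e k)))).mp hfjk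
    linarith
  -- denominators positive
  have hden : ∀ k, (0:ℝ) < (m (e k) : ℝ) - d := by
    intro k
    have := hm (e k)
    rw [(hlp k 0).2] at this
    linarith
  -- d ≤ c : since x ≤ 1
  have hdc : d ≤ c := by
    have h1 := hx1 (e 0)
    have h2 := hxeq (e 0)
    have h3 := hden 0
    rw [h2, div_le_one h3] at h1
    linarith
  -- m along e is strictly decreasing
  have hmanti : StrictAnti (fun k => m (e k)) := by
    intro j k hjk
    have hx' : x (e k) < x (e j) := hxanti hjk
    rw [hxeq (e j), hxeq (e k), (hlp j 0).2, (hlp k 0).2] at hx'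
    by_contra hmm
    push_neg at hmm
    -- m (e j) ≤ m (e k), show x (e j) ≤ x (e k)
    have hj := hden j; have hk := hden k
    have hmm' : ((m (e j) : ℝ)) ≤ ((m (e k) : ℝ)) := by exact_mod_cast hmm
    have key : ((m (e j) : ℝ) - c) / ((m (e j) : ℝ) - d) ≤ ((m (e k) : ℝ) - c) / ((m (e k) : ℝ) - d) := by
      rw [div_le_div_iff₀ hj hk]
      nlinarith
    linarith
  -- integers strictly decreasing bounded below: contradiction
  have hlow : ∀ k, ⌈d⌉ ≤ m (e k) := by
    intro k
    have := hm (e k)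
    rw [(hlp k 0).2] at this
    exact Int.ceil_le.mpr this.le
  have hub : ∀ k : ℕ, m (e k) ≤ m (e 0) - k := by
    intro k
    induction k with
    | zero => simp
    | succ n ih =>
      have := hmanti (show n < n + 1 by omega)
      dsimp only at this
      push_cast
      omega
  have := hub (m (e 0) - ⌈d⌉ + 1).toNat
  have := hlow (m (e 0) - ⌈d⌉ + 1).toNat
  omega
end

section
/- Let F be a finite subset of ℝ × ℝ. Then the set S = { x ∈ ℝ : 0 ≤ x ≤ 1 and there exist (c,d) ∈ F and an integer m with m > d and x = (m - c)/(m - d) } satisfies DCC. (This is the key step in Lemma 3(2): for each fixed (c,d), the values (m - c)/(m - d) increase to 1 as m → ∞, so the set of possible codiscrepancy coefficients α₀ ∈ [0,1] satisfies DCC.) -/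
/-- A set `S ⊆ ℝ` satisfies the descending chain condition: there is no strictly
decreasing sequence of elements of `S`. -/
def SatisfiesDCC (S : Set ℝ) : Prop :=
  ¬ ∃ f : ℕ → ℝ, StrictAnti f ∧ ∀ n, f n ∈ S

/-- For a single pair `(c, d)`, the corresponding set of coefficients is
well-founded under `<`. -/
lemma fiber_isWF (c d : ℝ) :
    Set.IsWF { x : ℝ | 0 ≤ x ∧ x ≤ 1 ∧
      ∃ m : ℤ, d < (m : ℝ) ∧ x = ((m : ℝ) - c) / ((m : ℝ) - d) } := by
  rw [Set.isWF_iff_no_descending_seq]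
  intro f hf hmem
  -- choose witnesses m n
  choose h0' h1' m hm hx' using hmem
  have h0 : ∀ n : ℕ, 0 ≤ f n := h0'
  have h1 : ∀ n : ℕ, f n ≤ 1 := h1'
  have hx : ∀ n : ℕ, f n = ((m n : ℝ) - c) / ((m n : ℝ) - d) := hx'
  -- case on comparison of c and d
  rcases lt_trichotomy c d with hcd | hcd | hcd
  · -- c < d : then f 0 > 1, contradiction
    have hden : (0 : ℝ) < (m 0 : ℝ) - d := by linarith [hm 0]
    have : (1 : ℝ) < ((m 0 : ℝ) - c) / ((m 0 : ℝ) - d) := by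
      rw [lt_div_iff₀ hden]; linarith
    have := h1 0
    rw [hx 0] at this
    linarith
  · -- c = d : then f 0 = f 1 = 1, contradicting strict antitonicity
    have e : ∀ n, f n = 1 := by
      intro n
      have hden : (0 : ℝ) < (m n : ℝ) - d := by linarith [hm n]
      rw [hx n, hcd, div_self (ne_of_gt hden)]
    have := hf (show (0:ℕ) < 1 by norm_num)
    rw [e 0, e 1] at this
    exact lt_irrefl _ this
  · -- c > d : m is strictly decreasing but bounded below
    have hmanti : StrictAnti m := by
      apply strictAnti_nat_of_succ_lt
      intro n
      have hdn : (0 : ℝ) < (m n : ℝ) - d := by linarith [hm n]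
      have hdn1 : (0 : ℝ) < (m (n+1) : ℝ) - d := by linarith [hm (n+1)]
      have hlt : f (n+1) < f n := hf (Nat.lt_succ_self n)
      rw [hx n, hx (n+1)] at hlt
      have key : (m (n+1) : ℝ) < (m n : ℝ) := by
        by_contra hge
        push_neg at hge
        have : ((m n : ℝ) - c) / ((m n : ℝ) - d) ≤ ((m (n+1) : ℝ) - c) / ((m (n+1) : ℝ) - d) := by
          rw [div_le_div_iff₀ hdn hdn1]
          nlinarith
        linarith
      exact_mod_cast key
    -- strictly decreasing integer sequence: m n ≤ m 0 - n
    have hbound : ∀ n : ℕ, m n ≤ m 0 - n := by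
      intro n
      induction n with
      | zero => simp
      | succ k ih =>
        have hs : m (k+1) < m k := hmanti (Nat.lt_succ_self k)
        push_cast
        omega
    set N : ℕ := (m 0 - ⌊d⌋).toNat with hN
    have h2 : m N ≤ ⌊d⌋ := by
      have := hbound N
      have hm0 : ⌊d⌋ ≤ m 0 := by
        have := hm 0
        have : d < (m 0 : ℝ) := this
        exact_mod_cast Int.floor_le_floor (le_of_lt this) |>.trans_eq (by simp)
      omega
    have : d < (m N : ℝ) := hm N
    have : (m N : ℝ) ≤ ⌊d⌋ := by exact_mod_cast h2
    have := Int.floor_le d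
    linarith

/-- The key step in Lemma 3(2): for a finite set `F ⊆ ℝ × ℝ`, the set of all
`x = (m - c)/(m - d) ∈ [0,1]` with `(c, d) ∈ F` and `m` an integer with `m > d`
satisfies the descending chain condition. -/
theorem dcc_of_codiscrepancy_coefficients (F : Finset (ℝ × ℝ)) :
    SatisfiesDCC { x : ℝ | 0 ≤ x ∧ x ≤ 1 ∧
      ∃ p ∈ F, ∃ m : ℤ, p.2 < (m : ℝ) ∧ x = ((m : ℝ) - p.1) / ((m : ℝ) - p.2) } := by
  have hwf : Set.IsWF (F.sup fun p => { x : ℝ | 0 ≤ x ∧ x ≤ 1 ∧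
      ∃ m : ℤ, p.2 < (m : ℝ) ∧ x = ((m : ℝ) - p.1) / ((m : ℝ) - p.2) }) := by
    rw [Finset.isWF_sup]
    intro p _
    exact fiber_isWF p.1 p.2
  have hsub : { x : ℝ | 0 ≤ x ∧ x ≤ 1 ∧
      ∃ p ∈ F, ∃ m : ℤ, p.2 < (m : ℝ) ∧ x = ((m : ℝ) - p.1) / ((m : ℝ) - p.2) } ⊆
      F.sup fun p => { x : ℝ | 0 ≤ x ∧ x ≤ 1 ∧
      ∃ m : ℤ, p.2 < (m : ℝ) ∧ x = ((m : ℝ) - p.1) / ((m : ℝ) - p.2) } := by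
    rintro x ⟨h0, h1, p, hpF, m, hm, hx⟩
    have hle := Finset.le_sup (f := fun p => { x : ℝ | 0 ≤ x ∧ x ≤ 1 ∧
      ∃ m : ℤ, p.2 < (m : ℝ) ∧ x = ((m : ℝ) - p.1) / ((m : ℝ) - p.2) }) hpF
    exact hle ⟨h0, h1, m, hm, hx⟩
  have := hwf.mono hsub
  rw [Set.isWF_iff_no_descending_seq] at this
  rintro ⟨f, hf, hmem⟩
  exact this f hf hmem
end

section
/- (Proposition A.1.1) Let b₁, b₂ ≥ 1 and r ≥ 0 be integers and let A be the 2 × 2 symmetric integer matrix with A 0 0 = -b₁, A 1 1 = -b₂ and A 0 1 = A 1 0 = r. Then A is an elliptic log canonical system if and only if one of the following holds: (1) r = 0; or (2) r = 1 and b₁ + b₂ > 2; or (3) r = 2, b₁ + b₂ > 4, b₁ ≥ 2 and b₂ ≥ 2. -/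
open Matrix

/-- A real matrix is negative definite: `xᵀ A x < 0` for every nonzero `x`. -/
def NegDefMat {V : Type*} [Fintype V] (A : Matrix V V ℝ) : Prop :=
  ∀ x : V → ℝ, x ≠ 0 → x ⬝ᵥ A.mulVec x < 0

/-- A real matrix is negative semidefinite: `xᵀ A x ≤ 0` for every `x`. -/
def NegSemidefMat {V : Type*} [Fintype V] (A : Matrix V V ℝ) : Prop :=
  ∀ x : V → ℝ, x ⬝ᵥ A.mulVec x ≤ 0

/-- A real symmetric matrix has at most one positive eigenvalue (with multiplicity). -/
def AtMostOnePosEig {V : Type*} [Fintype V] [DecidableEq V] (A : Matrix V V ℝ) : Prop :=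
  ∃ hA : A.IsHermitian, Fintype.card {i // 0 < hA.eigenvalues i} ≤ 1

/-- The real matrix associated to an integer matrix. -/
def matReal {V : Type*} (A : Matrix V V ℤ) : Matrix V V ℝ := A.map Int.cast

/-- An at most hyperbolic system of vectors, encoded by its Gram matrix. -/
def IsSystem {V : Type*} [Fintype V] [DecidableEq V] (A : Matrix V V ℤ) : Prop :=
  Nonempty V ∧ A.IsSymm ∧ (∀ i, A i i ≤ -1) ∧ (∀ i j, i ≠ j → 0 ≤ A i j) ∧
    AtMostOnePosEig (matReal A)

/-- The graph of a system: an edge between `i ≠ j` iff `A i j > 0`. -/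
def sysGraph {V : Type*} (A : Matrix V V ℤ) : SimpleGraph V :=
  SimpleGraph.fromRel fun i j => 0 < A i j

/-- The principal submatrix of `A` on a subset `s` of indices. -/
def subMat {V : Type*} (A : Matrix V V ℤ) (s : Finset V) :
    Matrix {i // i ∈ s} {i // i ∈ s} ℤ :=
  A.submatrix Subtype.val Subtype.val

/-- A system is elliptic if its Gram matrix is negative definite over `ℝ`. -/
def IsElliptic {V : Type*} [Fintype V] (A : Matrix V V ℤ) : Prop :=
  NegDefMat (matReal A)

/-- A system is hyperbolic if it is not negative semidefinite over `ℝ`. -/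
def IsHyperbolic {V : Type*} [Fintype V] (A : Matrix V V ℤ) : Prop :=
  ¬ NegSemidefMat (matReal A)

/-- A system is Lanner if it is hyperbolic but every proper subsystem
is negative semidefinite. -/
def IsLanner {V : Type*} [Fintype V] [DecidableEq V] (A : Matrix V V ℤ) : Prop :=
  IsHyperbolic A ∧ ∀ s : Finset V, s ≠ Finset.univ → NegSemidefMat (matReal (subMat A s))

/-- A system is connected parabolic if it is negative semidefinite but not negative
definite over `ℝ` and its graph is connected. -/
def IsConnParabolic {V : Type*} [Fintype V] (A : Matrix V V ℤ) : Prop :=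
  NegSemidefMat (matReal A) ∧ ¬ NegDefMat (matReal A) ∧ (sysGraph A).Connected

/-- A system is log canonical if for every subset `s` of indices whose principal
submatrix is negative definite, the canonical coefficients `α` (the unique solution of
`∑_{j ∈ s} A i j * α j = -A i i - 2` for `i ∈ s`) satisfy `α i ≥ -1` for all `i ∈ s`,
with strict inequality whenever `i` is joined, within the graph of `A` restricted to `s`,
to some `e ∈ s` with `A e e = -1`. -/
def IsLogCanonical {V : Type*} [Fintype V] [DecidableEq V] (A : Matrix V V ℤ) : Prop :=
  ∀ s : Finset V, NegDefMat (matReal (subMat A s)) →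
    ∀ α : V → ℝ, (∀ i ∈ s, ∑ j ∈ s, (A i j : ℝ) * α j = -(A i i : ℝ) - 2) →
      (∀ i ∈ s, -1 ≤ α i) ∧
      (∀ i e : {x // x ∈ s}, A e.val e.val = -1 →
        ((sysGraph A).comap (Subtype.val : {x // x ∈ s} → V)).Reachable i e →
        -1 < α i.val)

/-- An index `e` of the first kind (`A e e = -1`) is contractible if every other
index `i` satisfies `A i e = 0`, or `A i i ≤ -2` and `A i e = 1`. -/
def Contractible {V : Type*} (A : Matrix V V ℤ) (e : V) : Prop :=
  ∀ i, i ≠ e → A i e = 0 ∨ (A i i ≤ -2 ∧ A i e = 1)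

/-- A log canonical system is minimal if it contains no contractible element
of the first kind. -/
def IsMinimal {V : Type*} (A : Matrix V V ℤ) : Prop :=
  ¬ ∃ e, A e e = -1 ∧ Contractible A e

lemma atMostOne_of_negdef {V : Type*} [Fintype V] [DecidableEq V] (M : Matrix V V ℝ)
    (hM : M.IsHermitian) (h : NegDefMat M) : AtMostOnePosEig M := by
  refine ⟨hM, ?_⟩
  have : IsEmpty {i // 0 < hM.eigenvalues i} := by
    constructor
    rintro ⟨i, hi⟩
    set v : V → ℝ := ⇑(hM.eigenvectorBasis i) with hv
    have hvne : v ≠ 0 := by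
      have := hM.eigenvectorBasis.orthonormal.ne_zero i
      intro hc
      apply this
      ext j
      exact congrFun hc j
    have hmv : M *ᵥ v = hM.eigenvalues i • v := hM.mulVec_eigenvectorBasis i
    have hq := h v hvne
    rw [hmv] at hq
    have hdot : v ⬝ᵥ (hM.eigenvalues i • v) = hM.eigenvalues i * (v ⬝ᵥ v) := by
      simp [dotProduct, Finset.mul_sum, mul_comm, mul_left_comm]
    rw [hdot] at hq
    have hvv : 0 < v ⬝ᵥ v := by
      have h2 : v ⬝ᵥ v = ∑ j, v j ^ 2 := by simp [dotProduct, sq]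
      rw [h2]
      have hne : ∃ j, v j ≠ 0 := by
        by_contra hc
        push_neg at hc
        exact hvne (funext hc)
      obtain ⟨j, hj⟩ := hne
      exact Finset.sum_pos' (fun k _ => sq_nonneg _) ⟨j, Finset.mem_univ j, by positivity⟩
    nlinarith
  simp [Fintype.card_eq_zero]

lemma negdef_submatrix {V : Type*} [Fintype V] [DecidableEq V] (M : Matrix V V ℝ)
    (h : NegDefMat M) (s : Finset V) :
    NegDefMat (M.submatrix (Subtype.val : {x // x ∈ s} → V) Subtype.val) := by
  intro x hx
  set y : V → ℝ := fun v => if hv : v ∈ s then x ⟨v, hv⟩ else 0 with hy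
  have hyne : y ≠ 0 := by
    have : ∃ i, x i ≠ 0 := by
      by_contra hc; push_neg at hc; exact hx (funext hc)
    obtain ⟨i, hi⟩ := this
    intro hc
    apply hi
    have := congrFun hc i.val
    simpa [hy, i.property] using this
  have key : x ⬝ᵥ (M.submatrix (Subtype.val : {x // x ∈ s} → V) Subtype.val).mulVec x
      = y ⬝ᵥ M.mulVec y := by
    have inner : ∀ v : V, (M.mulVec y) v = ∑ j : {x // x ∈ s}, M v j.val * x j := by
      intro v
      rw [Matrix.mulVec, dotProduct]
      rw [← Finset.sum_subset (Finset.subset_univ s) (by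
        intro w _ hw
        simp [hy, hw])]
      rw [← Finset.sum_coe_sort s (fun w => M v w * y w)]
      apply Finset.sum_congr rfl
      intro j _
      simp [hy, j.property]
    rw [dotProduct, dotProduct]
    rw [← Finset.sum_subset (Finset.subset_univ s) (by
      intro w _ hw
      simp [hy, hw])]
    rw [← Finset.sum_coe_sort s (fun w => y w * (M.mulVec y) w)]
    apply Finset.sum_congr rfl
    intro i _
    rw [inner i.val]
    simp [hy, i.property, Matrix.mulVec, dotProduct, Matrix.submatrix_apply]
  rw [key]
  exact h y hyne

lemma negdef_two (b₁ b₂ r : ℝ) (h1 : 0 < b₁) (hd : r * r < b₁ * b₂)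
    (M : Matrix (Fin 2) (Fin 2) ℝ) (h00 : M 0 0 = -b₁) (h01 : M 0 1 = r)
    (h10 : M 1 0 = r) (h11 : M 1 1 = -b₂) : NegDefMat M := by
  intro x hx
  have hq : x ⬝ᵥ M.mulVec x
      = -b₁ * x 0 ^ 2 + 2 * r * (x 0 * x 1) - b₂ * x 1 ^ 2 := by
    simp [dotProduct, Matrix.mulVec, Fin.sum_univ_two, h00, h01, h10, h11]
    ring
  obtain ⟨i, hi⟩ : ∃ i, x i ≠ 0 := by
    by_contra hc; push_neg at hc; exact hx (funext hc)
  rw [hq]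
  by_cases h1' : x 1 = 0
  · have h0 : x 0 ≠ 0 := by fin_cases i <;> simp_all
    have : 0 < x 0 ^ 2 := by positivity
    rw [h1']
    nlinarith [mul_pos h1 this]
  · have : 0 < x 1 ^ 2 := by positivity
    nlinarith [sq_nonneg (b₁ * x 0 - r * x 1),
      mul_pos (by nlinarith : (0:ℝ) < b₁ * b₂ - r * r) this]

set_option maxHeartbeats 1000000 in
/-- Proposition A.1.1: the 2×2 symmetric integer matrix with diagonal `-b₁, -b₂`
(`b₁, b₂ ≥ 1`) and off-diagonal entries `r ≥ 0` is an elliptic log canonical system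
if and only if `r = 0`, or `r = 1` and `b₁ + b₂ > 2`, or `r = 2`, `b₁ + b₂ > 4`,
`b₁ ≥ 2` and `b₂ ≥ 2`. -/
theorem elliptic_logCanonical_two_by_two (b₁ b₂ r : ℤ)
    (hb₁ : 1 ≤ b₁) (hb₂ : 1 ≤ b₂) (hr : 0 ≤ r)
    (A : Matrix (Fin 2) (Fin 2) ℤ) (hA : A = !![-b₁, r; r, -b₂]) :
    (IsSystem A ∧ _root_.IsElliptic A ∧ IsLogCanonical A) ↔
      (r = 0 ∨ (r = 1 ∧ 2 < b₁ + b₂) ∨ (r = 2 ∧ 4 < b₁ + b₂ ∧ 2 ≤ b₁ ∧ 2 ≤ b₂)) := by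
  subst hA
  have hB₁ : (1:ℝ) ≤ (b₁:ℝ) := by exact_mod_cast hb₁
  have hB₂ : (1:ℝ) ≤ (b₂:ℝ) := by exact_mod_cast hb₂
  have hR : (0:ℝ) ≤ (r:ℝ) := by exact_mod_cast hr
  have e00 : (!![-b₁, r; r, -b₂]) 0 0 = -b₁ := rfl
  have e01 : (!![-b₁, r; r, -b₂]) 0 1 = r := rfl
  have e10 : (!![-b₁, r; r, -b₂]) 1 0 = r := rfl
  have e11 : (!![-b₁, r; r, -b₂]) 1 1 = -b₂ := rfl
  constructor
  · rintro ⟨-, hell, hlc⟩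
    have hdR : (r:ℝ) * r < (b₁:ℝ) * b₂ := by
      have hx : (![(r:ℝ), (b₁:ℝ)]) ≠ 0 := by
        intro hc
        have := congrFun hc 1
        simp at this
        linarith
      have hq := hell _ hx
      simp only [matReal, dotProduct, Matrix.mulVec, Fin.sum_univ_two, Matrix.map_apply,
        e00, e01, e10, e11, Matrix.cons_val_zero, Matrix.cons_val_one, Matrix.head_cons] at hq
      push_cast at hq
      nlinarith
    have hdZ : r * r < b₁ * b₂ := by exact_mod_cast hdR
    have hdne : (b₁:ℝ) * b₂ - r * r ≠ 0 := by nlinarith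
    set a₀ : ℝ := (-((b₂:ℝ) * ((b₁:ℝ) - 2)) - (r:ℝ) * ((b₂:ℝ) - 2)) / ((b₁:ℝ) * b₂ - r * r)
      with ha₀
    set a₁ : ℝ := (-((b₁:ℝ) * ((b₂:ℝ) - 2)) - (r:ℝ) * ((b₁:ℝ) - 2)) / ((b₁:ℝ) * b₂ - r * r)
      with ha₁
    have hsub : NegDefMat (matReal (subMat (!![-b₁, r; r, -b₂]) Finset.univ)) :=
      negdef_submatrix _ hell Finset.univ
    have heqs : ∀ i ∈ Finset.univ, ∑ j ∈ Finset.univ,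
        ((!![-b₁, r; r, -b₂]) i j : ℝ) * (![a₀, a₁]) j
          = -((!![-b₁, r; r, -b₂]) i i : ℝ) - 2 := by
      intro i _
      fin_cases i
      · rw [Fin.sum_univ_two]
        simp only [e00, e01, e10, e11, Matrix.cons_val_zero, Matrix.cons_val_one,
          Matrix.head_cons, Matrix.of_apply, Matrix.cons_val', Matrix.empty_val',
          Matrix.cons_val_fin_one]
        push_cast
        rw [ha₀, ha₁]
        linear_combination ((b₁:ℝ) - 2) * mul_inv_cancel₀ hdne
      · rw [Fin.sum_univ_two]
        simp only [e00, e01, e10, e11, Matrix.cons_val_zero, Matrix.cons_val_one,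
          Matrix.head_cons, Matrix.of_apply, Matrix.cons_val', Matrix.empty_val',
          Matrix.cons_val_fin_one]
        push_cast
        rw [ha₀, ha₁]
        linear_combination ((b₂:ℝ) - 2) * mul_inv_cancel₀ hdne
    obtain ⟨hweak, hstrict⟩ := hlc Finset.univ hsub (![a₀, a₁]) heqs
    have h0 := hweak 0 (Finset.mem_univ 0)
    have h1 := hweak 1 (Finset.mem_univ 1)
    simp only [Matrix.cons_val_zero, Matrix.cons_val_one, Matrix.head_cons] at h0 h1
    have key0 : ((b₁:ℝ) * b₂ - r * r) * (a₀ + 1) = (2 - r) * ((b₂:ℝ) + r) := by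
      rw [ha₀]; linear_combination (-((b₂:ℝ) * ((b₁:ℝ) - 2)) - (r:ℝ) * ((b₂:ℝ) - 2)) * mul_inv_cancel₀ hdne
    have key1 : ((b₁:ℝ) * b₂ - r * r) * (a₁ + 1) = (2 - r) * ((b₁:ℝ) + r) := by
      rw [ha₁]; linear_combination (-((b₁:ℝ) * ((b₂:ℝ) - 2)) - (r:ℝ) * ((b₁:ℝ) - 2)) * mul_inv_cancel₀ hdne
    have hr2 : r ≤ 2 := by
      by_contra hc
      push_neg at hc
      have hc' : (3:ℝ) ≤ (r:ℝ) := by exact_mod_cast hc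
      nlinarith
    interval_cases r
    · exact Or.inl rfl
    · refine Or.inr (Or.inl ⟨rfl, ?_⟩)
      by_contra hc
      push_neg at hc
      have hbb : b₁ = 1 ∧ b₂ = 1 := by omega
      obtain ⟨rfl, rfl⟩ := hbb
      norm_num at hdZ
    · have h4 : (4:ℝ) < (b₁:ℝ) * b₂ := by push_cast at hdR; linarith
      have key0' : ((b₁:ℝ) * b₂ - 4) * (a₀ + 1) = 0 := by
        push_cast at key0; linear_combination key0
      have key1' : ((b₁:ℝ) * b₂ - 4) * (a₁ + 1) = 0 := by
        push_cast at key1; linear_combination key1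
      have ha0v : a₀ = -1 := by
        rcases mul_eq_zero.mp key0' with h | h
        · linarith
        · linarith
      have ha1v : a₁ = -1 := by
        rcases mul_eq_zero.mp key1' with h | h
        · linarith
        · linarith
      have hb12 : 2 ≤ b₁ := by
        by_contra hc
        push_neg at hc
        have hb1 : b₁ = 1 := by omega
        have hstr := hstrict ⟨0, Finset.mem_univ 0⟩ ⟨0, Finset.mem_univ 0⟩
          (by simp [hb1]) (SimpleGraph.Reachable.refl _)
        simp only [Matrix.cons_val_zero] at hstr
        linarith
      have hb22 : 2 ≤ b₂ := by
        by_contra hc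
        push_neg at hc
        have hb2 : b₂ = 1 := by omega
        have hstr := hstrict ⟨1, Finset.mem_univ 1⟩ ⟨1, Finset.mem_univ 1⟩
          (by simp [hb2]) (SimpleGraph.Reachable.refl _)
        simp only [Matrix.cons_val_one, Matrix.head_cons, Matrix.cons_val_zero] at hstr
        linarith
      refine Or.inr (Or.inr ⟨rfl, ?_, hb12, hb22⟩)
      by_contra hc
      push_neg at hc
      have hbb : b₁ = 2 ∧ b₂ = 2 := by omega
      obtain ⟨rfl, rfl⟩ := hbb
      norm_num at hdZ
  · intro hcase
    have hdZ : r * r < b₁ * b₂ := by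
      rcases hcase with rfl | ⟨rfl, h⟩ | ⟨rfl, h, h1, h2⟩
      · nlinarith
      · nlinarith
      · nlinarith
    have hdR : (r:ℝ) * r < (b₁:ℝ) * b₂ := by exact_mod_cast hdZ
    have hell : NegDefMat (matReal (!![-b₁, r; r, -b₂])) := by
      apply negdef_two (b₁:ℝ) (b₂:ℝ) (r:ℝ) (by linarith) hdR <;>
        simp [matReal, e00, e01, e10, e11]
    have hherm : (matReal (!![-b₁, r; r, -b₂])).IsHermitian := by
      show (matReal (!![-b₁, r; r, -b₂]))ᴴ = matReal (!![-b₁, r; r, -b₂])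
      ext i j
      fin_cases i <;> fin_cases j <;>
        simp [matReal, Matrix.conjTranspose_apply, e00, e01, e10, e11]
    refine ⟨⟨⟨0⟩, ?_, ?_, ?_, atMostOne_of_negdef _ hherm hell⟩, hell, ?_⟩
    · apply Matrix.IsSymm.ext
      intro i j
      fin_cases i <;> fin_cases j <;> simp [e00, e01, e10, e11]
    · intro i
      fin_cases i <;> simp <;> omega
    · intro i j hij
      fin_cases i <;> fin_cases j <;> simp_all
    · intro s hs α hα
      have hs4 : s = ∅ ∨ s = {0} ∨ s = {1} ∨ s = Finset.univ := by
        by_cases h0 : (0 : Fin 2) ∈ s <;> by_cases h1 : (1 : Fin 2) ∈ s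
        · refine Or.inr (Or.inr (Or.inr ?_)); ext x; fin_cases x <;> simp [h0, h1]
        · refine Or.inr (Or.inl ?_); ext x; fin_cases x <;> simp [h0, h1]
        · refine Or.inr (Or.inr (Or.inl ?_)); ext x; fin_cases x <;> simp [h0, h1]
        · refine Or.inl ?_; ext x; fin_cases x <;> simp [h0, h1]
      rcases hs4 with rfl | rfl | rfl | rfl
      · exact ⟨fun i hi => absurd hi (by simp), fun i e _ _ => absurd i.2 (Finset.notMem_empty _)⟩
      · have he := hα 0 (Finset.mem_singleton_self 0)
        rw [Finset.sum_singleton, e00] at he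
        push_cast at he
        have hstr : -1 < α 0 := by nlinarith
        refine ⟨?_, ?_⟩
        · intro i hi
          rw [Finset.mem_singleton] at hi
          subst hi
          linarith
        · rintro ⟨iv, hiv⟩ e he' hre
          rw [Finset.mem_singleton] at hiv
          subst hiv
          exact hstr
      · have he := hα 1 (Finset.mem_singleton_self 1)
        rw [Finset.sum_singleton, e11] at he
        push_cast at he
        have hstr : -1 < α 1 := by nlinarith
        refine ⟨?_, ?_⟩
        · intro i hi
          rw [Finset.mem_singleton] at hi
          subst hi
          linarith
        · rintro ⟨iv, hiv⟩ e he' hre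
          rw [Finset.mem_singleton] at hiv
          subst hiv
          exact hstr
      · have he0 := hα 0 (Finset.mem_univ 0)
        have he1 := hα 1 (Finset.mem_univ 1)
        rw [Fin.sum_univ_two, e00, e01] at he0
        rw [Fin.sum_univ_two, e10, e11] at he1
        clear hα hs hell hherm
        push_cast at he0 he1
        have E0 : -(b₁:ℝ) * α 0 + (r:ℝ) * α 1 = (b₁:ℝ) - 2 := by linear_combination he0
        have E1 : (r:ℝ) * α 0 - (b₂:ℝ) * α 1 = (b₂:ℝ) - 2 := by linear_combination he1
        rcases hcase with rfl | ⟨rfl, hbb⟩ | ⟨rfl, hbb, hb12, hb22⟩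
        · push_cast at E0 E1
          have hstr0 : -1 < α 0 := by nlinarith [E0]
          have hstr1 : -1 < α 1 := by nlinarith [E1]
          refine ⟨?_, ?_⟩
          · intro i hi
            fin_cases i
            · exact le_of_lt hstr0
            · exact le_of_lt hstr1
          · rintro ⟨iv, hiv⟩ e he' hre
            fin_cases iv
            · exact hstr0
            · exact hstr1
        · push_cast at E0 E1
          have hd1 : (1:ℝ) < (b₁:ℝ) * b₂ := by
            have : (1:ℤ) < b₁ * b₂ := by nlinarith
            exact_mod_cast this
          have key0 : ((b₁:ℝ) * b₂ - 1) * (α 0 + 1) = (b₂:ℝ) + 1 := by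
            linear_combination (-(b₂:ℝ)) * E0 - E1
          have key1 : ((b₁:ℝ) * b₂ - 1) * (α 1 + 1) = (b₁:ℝ) + 1 := by
            linear_combination -E0 - (b₁:ℝ) * E1
          have hstr0 : -1 < α 0 := by nlinarith [key0]
          have hstr1 : -1 < α 1 := by nlinarith [key1]
          refine ⟨?_, ?_⟩
          · intro i hi
            fin_cases i
            · exact le_of_lt hstr0
            · exact le_of_lt hstr1
          · rintro ⟨iv, hiv⟩ e he' hre
            fin_cases iv
            · exact hstr0
            · exact hstr1
        · push_cast at E0 E1
          have hd4 : (4:ℝ) < (b₁:ℝ) * b₂ := by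
            have : (4:ℤ) < b₁ * b₂ := by nlinarith
            exact_mod_cast this
          have key0 : ((b₁:ℝ) * b₂ - 4) * (α 0 + 1) = 0 := by
            linear_combination (-(b₂:ℝ)) * E0 - 2 * E1
          have key1 : ((b₁:ℝ) * b₂ - 4) * (α 1 + 1) = 0 := by
            linear_combination -2 * E0 - (b₁:ℝ) * E1
          have hα0 : α 0 = -1 := by
            rcases mul_eq_zero.mp key0 with h | h
            · nlinarith
            · linarith
          have hα1 : α 1 = -1 := by
            rcases mul_eq_zero.mp key1 with h | h
            · nlinarith
            · linarith
          refine ⟨?_, ?_⟩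
          · intro i hi
            fin_cases i
            · exact le_of_eq hα0.symm
            · exact le_of_eq hα1.symm
          · rintro i ⟨ev, hev⟩ he' hre
            exfalso
            fin_cases ev
            · have hv : -b₁ = (-1:ℤ) := he'
              omega
            · have hv : -b₂ = (-1:ℤ) := he'
              omega
end

section
/- (Corollary A.1.2) Let A be a log canonical system and let e be an index with A e e = -1. Then e is contractible (i.e., for every i ≠ e either A i e = 0, or A i i ≤ -2 and A i e = 1) if and only if for every index i ≠ e the 2 × 2 principal submatrix of A on {i, e} is negative definite over ℝ. -/
open Matrix

lemma pair_univ {V : Type*} [DecidableEq V] (i e : V)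
    (hI : i ∈ ({i, e} : Finset V)) (hE : e ∈ ({i, e} : Finset V)) :
    (Finset.univ : Finset {v // v ∈ ({i, e} : Finset V)}) = {⟨i, hI⟩, ⟨e, hE⟩} := by
  ext p
  simp only [Finset.mem_univ, true_iff, Finset.mem_insert, Finset.mem_singleton]
  rcases Finset.mem_insert.mp p.2 with h | h
  · exact Or.inl (Subtype.ext h)
  · exact Or.inr (Subtype.ext (Finset.mem_singleton.mp h))

lemma pair_form {V : Type*} [Fintype V] [DecidableEq V] (A : Matrix V V ℤ) (i e : V)
    (hne : i ≠ e) (x : {v // v ∈ ({i, e} : Finset V)} → ℝ) :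
    x ⬝ᵥ (matReal (subMat A {i, e})).mulVec x =
      (A i i : ℝ) * x ⟨i, Finset.mem_insert_self i {e}⟩ * x ⟨i, Finset.mem_insert_self i {e}⟩
      + (A i e : ℝ) * x ⟨i, Finset.mem_insert_self i {e}⟩ *
          x ⟨e, Finset.mem_insert_of_mem (Finset.mem_singleton_self e)⟩
      + (A e i : ℝ) * x ⟨e, Finset.mem_insert_of_mem (Finset.mem_singleton_self e)⟩ *
          x ⟨i, Finset.mem_insert_self i {e}⟩
      + (A e e : ℝ) * x ⟨e, Finset.mem_insert_of_mem (Finset.mem_singleton_self e)⟩ *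
          x ⟨e, Finset.mem_insert_of_mem (Finset.mem_singleton_self e)⟩ := by
  have hI : i ∈ ({i, e} : Finset V) := Finset.mem_insert_self i {e}
  have hE : e ∈ ({i, e} : Finset V) := Finset.mem_insert_of_mem (Finset.mem_singleton_self e)
  have hIE : (⟨i, hI⟩ : {v // v ∈ ({i, e} : Finset V)}) ≠ ⟨e, hE⟩ :=
    fun h => hne (congrArg Subtype.val h)
  simp only [dotProduct, Matrix.mulVec, matReal, subMat, Matrix.map_apply,
    Matrix.submatrix_apply, pair_univ i e hI hE, Finset.sum_pair hIE]
  ring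

/-- Corollary A.1.2: in a log canonical system `A`, an element `e` of the first kind
(`A e e = -1`) is contractible if and only if for every index `i ≠ e` the `2 × 2`
principal submatrix of `A` on `{i, e}` is negative definite over `ℝ`. -/
theorem contractible_iff_pairs_elliptic {V : Type*} [Fintype V] [DecidableEq V]
    (A : Matrix V V ℤ) (hsys : IsSystem A) (hlc : IsLogCanonical A)
    (e : V) (he : A e e = -1) :
    Contractible A e ↔
      ∀ i, i ≠ e → NegDefMat (matReal (subMat A {i, e})) := by
  obtain ⟨-, hsym, hdiag, hoff, -⟩ := hsys
  have hsymapp : ∀ i j, A j i = A i j := fun i j => hsym.apply i j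
  constructor
  · -- contractible → pairs neg def
    intro hc i hne x hx
    rw [pair_form A i e hne x]
    set u := x ⟨i, Finset.mem_insert_self i {e}⟩ with hu
    set v := x ⟨e, Finset.mem_insert_of_mem (Finset.mem_singleton_self e)⟩ with hv
    have huv : u ≠ 0 ∨ v ≠ 0 := by
      by_contra h
      push_neg at h
      apply hx
      funext p
      rcases Finset.mem_insert.mp p.2 with hp | hp
      · have : p = ⟨i, Finset.mem_insert_self i {e}⟩ := Subtype.ext hp
        rw [this]; exact h.1
      · have : p = ⟨e, Finset.mem_insert_of_mem (Finset.mem_singleton_self e)⟩ :=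
          Subtype.ext (Finset.mem_singleton.mp hp)
        rw [this]; exact h.2
    have hei : A e i = A i e := hsymapp i e
    have ha : (A i i : ℝ) ≤ -1 := by exact_mod_cast hdiag i
    have hee : (A e e : ℝ) = -1 := by exact_mod_cast he
    rcases hc i hne with hb | ⟨ha2, hb⟩
    · have hb' : (A i e : ℝ) = 0 := by exact_mod_cast hb
      rw [hei, hb', hee]
      rcases huv with h | h
      · nlinarith [mul_self_pos.mpr h, mul_self_nonneg v]
      · nlinarith [mul_self_pos.mpr h, mul_self_nonneg u]
    · have hb' : (A i e : ℝ) = 1 := by exact_mod_cast hb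
      have ha2' : (A i i : ℝ) ≤ -2 := by exact_mod_cast ha2
      rw [hei, hb', hee]
      rcases huv with h | h
      · nlinarith [mul_self_pos.mpr h, mul_self_nonneg (u - v)]
      · nlinarith [mul_self_pos.mpr h, mul_self_nonneg (2*u - v), mul_self_nonneg u]
  · -- pairs neg def → contractible
    intro hpairs i hne
    have hI : i ∈ ({i, e} : Finset V) := Finset.mem_insert_self i {e}
    have hE : e ∈ ({i, e} : Finset V) := Finset.mem_insert_of_mem (Finset.mem_singleton_self e)
    have hb0 : 0 ≤ A i e := hoff i e hne
    have hei : A e i = A i e := hsymapp i e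
    have hee : (A e e : ℝ) = -1 := by exact_mod_cast he
    -- the quadratic form at (1, A i e) gives A i i + (A i e)^2 < 0
    have hden : (A i i : ℝ) + (A i e : ℝ) * (A i e : ℝ) < 0 := by
      set x : {v // v ∈ ({i, e} : Finset V)} → ℝ :=
        fun p => if p.val = i then 1 else (A i e : ℝ) with hxdef
      have hx : x ≠ 0 := by
        intro h
        have : x ⟨i, hI⟩ = 0 := by rw [h]; rfl
        rw [hxdef] at this
        simp at this
      have := hpairs i hne x hx
      rw [pair_form A i e hne x] at this
      have h1 : x ⟨i, hI⟩ = 1 := by rw [hxdef]; simp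
      have h2 : x ⟨e, hE⟩ = (A i e : ℝ) := by
        rw [hxdef]; simp [hne.symm]
      rw [h1, h2, hei, hee] at this
      nlinarith [this]
    rcases eq_or_lt_of_le hb0 with hb | hb
    · exact Or.inl hb.symm
    · -- A i e ≥ 1
      have hb1 : 1 ≤ A i e := hb
      have ha2 : A i i ≤ -2 := by
        have : A i i + A i e * A i e < 0 := by exact_mod_cast hden
        nlinarith
    -- show A i e = 1
      rcases eq_or_lt_of_le hb1 with h1 | h2
      · exact Or.inr ⟨ha2, h1.symm⟩
      exfalso
      have hb2 : (2 : ℝ) ≤ (A i e : ℝ) := by exact_mod_cast h2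
      set a : ℝ := (A i i : ℝ) with hadef
      set b : ℝ := (A i e : ℝ) with hbdef
      set αi : ℝ := (-a - 2 - b) / (a + b * b) with hαidef
      set α : V → ℝ := fun v => if v = i then αi else if v = e then b * αi + 1 else 0 with hαdef
      have hαi : α i = αi := by rw [hαdef]; simp
      have hαe : α e = b * αi + 1 := by rw [hαdef]; simp [hne.symm]
      have hcancel : αi * (a + b * b) = -a - 2 - b :=
        div_mul_cancel₀ _ (ne_of_lt hden)
      have hα : ∀ j ∈ ({i, e} : Finset V),
          ∑ k ∈ ({i, e} : Finset V), (A j k : ℝ) * α k = -(A j j : ℝ) - 2 := by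
        intro j hj
        rw [Finset.sum_pair hne]
        rcases Finset.mem_insert.mp hj with hj | hj
        · subst hj
          rw [hαi, hαe]
          linear_combination hcancel
        · rw [Finset.mem_singleton.mp hj, hαi, hαe, hei, hee]
          ring
      obtain ⟨-, hstrict⟩ := hlc {i, e} (hpairs i hne) α hα
      have hadj : ((sysGraph A).comap (Subtype.val : {x // x ∈ ({i, e} : Finset V)} → V)).Adj
          ⟨i, hI⟩ ⟨e, hE⟩ := by
        simp only [SimpleGraph.comap_adj, sysGraph, SimpleGraph.fromRel_adj]
        exact ⟨hne, Or.inl (by omega)⟩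
      have hgt := hstrict ⟨i, hI⟩ ⟨e, hE⟩ he hadj.reachable
      rw [hαi] at hgt
      have := (lt_div_iff_of_neg hden).mp hgt
      nlinarith
end

section
/- (Theorem A.1.4(a), first assertion) An elliptic log canonical system A is minimal if and only if it contains no element of the first kind, i.e. no index i with A i i = -1. -/
open Matrix

lemma sum_restrict {V : Type*} [Fintype V] [DecidableEq V] (s : Finset V) (f : V → ℝ)
    (hf : ∀ v ∉ s, f v = 0) : ∑ v : V, f v = ∑ v : {u // u ∈ s}, f v := by
  rw [Finset.sum_coe_sort s f]
  exact (Finset.sum_subset (Finset.subset_univ s) (fun w _ hw => hf w hw)).symm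

lemma negdef_submat {V : Type*} [Fintype V] [DecidableEq V] (A : Matrix V V ℤ)
    (h : NegDefMat (matReal A)) (s : Finset V) : NegDefMat (matReal (subMat A s)) := by
  intro x hx
  classical
  set y : V → ℝ := fun v => if hv : v ∈ s then x ⟨v, hv⟩ else 0 with hy
  have hyne : y ≠ 0 := by
    intro h0
    apply hx
    funext i
    have := congrFun h0 i.1
    simpa [hy, i.2] using this
  have hys : ∀ w : {u // u ∈ s}, y w.1 = x w := by
    intro w; simp [hy, w.2]
  have inner : ∀ v : V, (matReal A).mulVec y v = ∑ w : {u // u ∈ s}, (A v w : ℝ) * x w := by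
    intro v
    rw [mulVec, dotProduct,
      sum_restrict s (fun w => matReal A v w * y w) (by intro w hw; simp [hy, hw])]
    exact Finset.sum_congr rfl fun w _ => by rw [hys w]; rfl
  have key : y ⬝ᵥ (matReal A).mulVec y = x ⬝ᵥ (matReal (subMat A s)).mulVec x := by
    rw [dotProduct,
      sum_restrict s (fun v => y v * (matReal A).mulVec y v)
        (by intro w hw; simp [hy, hw])]
    apply Finset.sum_congr rfl
    intro v _
    rw [hys v, inner v.1]
    rfl
  rw [← key]
  exact h y hyne

/-- Theorem A.1.4(a), first assertion: an elliptic log canonical system is minimal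
if and only if it contains no element of the first kind. -/
theorem elliptic_minimal_iff_no_first_kind {V : Type*} [Fintype V] [DecidableEq V]
    (A : Matrix V V ℤ) (hsys : IsSystem A) (hell : IsElliptic A)
    (hlc : IsLogCanonical A) :
    IsMinimal A ↔ ¬ ∃ i, A i i = -1 := by
  constructor
  · -- minimal → no first kind
    intro hmin ⟨e, he⟩
    apply hmin
    refine ⟨e, he, ?_⟩
    intro i hie
    obtain ⟨_, hsymm, hdiag, hoff, _⟩ := hsys
    rcases eq_or_lt_of_le (hoff i e hie) with h0 | hpos
    · exact Or.inl h0.symm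
    -- A i e > 0; use log canonical on s = {i, e}
    set a : ℤ := A i e with ha
    set b : ℤ := A i i with hb
    have hei : A e i = a := by
      have := congrFun (congrFun hsymm i) e
      simpa [Matrix.transpose_apply] using this
    -- det condition: a^2 + b < 0
    have hdet : (a : ℝ) ^ 2 + (b : ℝ) < 0 := by
      set y : V → ℝ := fun v => if v = i then (a : ℝ) else if v = e then -(b : ℝ) else 0 with hy
      have hb1 : b ≤ -1 := hdiag i
      have hyne : y ≠ 0 := by
        intro h0
        have := congrFun h0 i
        simp [hy] at this
        omega
      have hq := hell y hyne
      have hyi : y i = (a : ℝ) := by simp [hy]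
      have hye : y e = -(b : ℝ) := by simp [hy, Ne.symm hie]
      have hmv : ∀ v, (matReal A).mulVec y v
          = (A v i : ℝ) * (a : ℝ) + (A v e : ℝ) * (-(b : ℝ)) := by
        intro v
        rw [mulVec, dotProduct,
          Finset.sum_eq_add_of_mem i e (Finset.mem_univ i) (Finset.mem_univ e) hie
            (fun w _ hw => by simp [hy, hw.1, hw.2]), hyi, hye]
        rfl
      have hdp : y ⬝ᵥ (matReal A).mulVec y = -(b : ℝ) * ((a : ℝ) ^ 2 + (b : ℝ)) := by
        rw [dotProduct,
          Finset.sum_eq_add_of_mem i e (Finset.mem_univ i) (Finset.mem_univ e) hie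
            (fun w _ hw => by simp [hy, hw.1, hw.2]), hyi, hye, hmv i, hmv e, hei, he,
          ← ha, ← hb]
        push_cast
        ring
      rw [hdp] at hq
      have hbneg : (0 : ℝ) < -(b : ℝ) := by
        have : (b : ℝ) ≤ -1 := by exact_mod_cast hb1
        linarith
      nlinarith
    -- canonical coefficients on s = {i, e}
    set s : Finset V := {i, e} with hs
    have hmemi : i ∈ s := by simp [hs]
    have hmeme : e ∈ s := by simp [hs]
    set d : ℝ := -(b : ℝ) - (a : ℝ) ^ 2 with hd
    have hdpos : 0 < d := by rw [hd]; linarith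
    set αi : ℝ := ((b : ℝ) + 2 + (a : ℝ)) / d with hαi
    set α : V → ℝ := fun v => if v = i then αi else if v = e then (a : ℝ) * αi + 1 else 0
      with hα
    have hαival : α i = αi := by simp [hα]
    have hαeval : α e = (a : ℝ) * αi + 1 := by simp [hα, Ne.symm hie]
    have heqs : ∀ v ∈ s, ∑ j ∈ s, (A v j : ℝ) * α j = -(A v v : ℝ) - 2 := by
      intro v hv
      rw [Finset.sum_pair hie, hαival, hαeval]
      rcases Finset.mem_insert.mp hv with rfl | hv'
      · rw [← hb, ← ha, hαi, hd]
        have hdne : -(b : ℝ) - (a : ℝ) ^ 2 ≠ 0 := by linarith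
        field_simp
        ring
      · rw [Finset.mem_singleton.mp hv', hei, he, hαi, hd]
        have hdne : -(b : ℝ) - (a : ℝ) ^ 2 ≠ 0 := by linarith
        field_simp
        ring
    obtain ⟨_, hstrict⟩ := hlc s (negdef_submat A hell s) α heqs
    have hreach : ((sysGraph A).comap (Subtype.val : {x // x ∈ s} → V)).Reachable
        ⟨i, hmemi⟩ ⟨e, hmeme⟩ := by
      apply SimpleGraph.Adj.reachable
      simp only [SimpleGraph.comap_adj]
      simp only [sysGraph, SimpleGraph.fromRel_adj]
      exact ⟨hie, Or.inl hpos⟩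
    have hgt := hstrict ⟨i, hmemi⟩ ⟨e, hmeme⟩ he hreach
    rw [hαival, hαi] at hgt
    have h1 : (-1 : ℝ) * d < (b : ℝ) + 2 + (a : ℝ) := (lt_div_iff₀ hdpos).mp hgt
    have h2 : (a : ℝ) ^ 2 < (a : ℝ) + 2 := by rw [hd] at h1; linarith
    have h2z : a ^ 2 < a + 2 := by exact_mod_cast h2
    have ha1 : a = 1 := by nlinarith [hpos]
    have hbz : (b : ℝ) < -1 := by rw [ha1] at hdet; push_cast at hdet; linarith
    have hb2 : b ≤ -2 := by
      have : b < -1 := by exact_mod_cast hbz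
      omega
    exact Or.inr ⟨hb2, ha1⟩
  · intro h ⟨e, he, _⟩
    exact h ⟨e, he⟩
end

section
/- (Corollary A.1.5, structural part) Let A be an elliptic log canonical system with graph Γ. Then: (i) A i j ≤ 2 for all i ≠ j; (ii) if A i j = 2 for some i ≠ j, then A i k = 0 and A j k = 0 for every k ∉ {i, j} (a double edge is an isolated connected component); (iii) every index i with A i i = -1 has at most two neighbours in Γ; (iv) if distinct vertices i₁, ..., i_k (k ≥ 3) form a cycle in Γ (consecutive vertices adjacent, cyclically), then for each t the only neighbours of i_t in Γ are its two cyclic neighbours (every cycle is an isolated connected component). -/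
open Matrix

set_option linter.unusedSectionVars false

section Aux
variable {V : Type*} [Fintype V] [DecidableEq V]


/-- restricted quadratic form -/
lemma quad_restrict (A : Matrix V V ℤ) (s : Finset V) (x : V → ℝ)
    (hx : ∀ v, v ∉ s → x v = 0) :
    x ⬝ᵥ (matReal A).mulVec x = ∑ i ∈ s, x i * ∑ j ∈ s, (A i j : ℝ) * x j := by
  have inner : ∀ i, (matReal A).mulVec x i = ∑ j ∈ s, (A i j : ℝ) * x j := by
    intro i
    rw [mulVec, dotProduct]
    rw [← Finset.sum_subset (Finset.subset_univ s)]
    · rfl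
    · intro j _ hj
      rw [hx j hj, mul_zero]
  rw [dotProduct]
  rw [← Finset.sum_subset (Finset.subset_univ s)]
  · exact Finset.sum_congr rfl fun i _ => by rw [inner]
  · intro i _ hi; rw [hx i hi, zero_mul]

lemma quad_neg (A : Matrix V V ℤ) (hell : NegDefMat (matReal A)) (s : Finset V)
    (x : V → ℝ) (hx : ∀ v, v ∉ s → x v = 0) (r : V → ℝ)
    (hr : ∀ i ∈ s, ∑ j ∈ s, (A i j : ℝ) * x j = r i) (h0 : x ≠ 0) :
    ∑ i ∈ s, x i * r i < 0 := by
  have := hell x h0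
  rw [quad_restrict A s x hx] at this
  calc ∑ i ∈ s, x i * r i = ∑ i ∈ s, x i * ∑ j ∈ s, (A i j : ℝ) * x j :=
        Finset.sum_congr rfl fun i hi => by rw [hr i hi]
    _ < 0 := this

/-- if rows vanish then x = 0 -/
lemma quad_zero (A : Matrix V V ℤ) (hell : NegDefMat (matReal A)) (s : Finset V)
    (x : V → ℝ) (hx : ∀ v, v ∉ s → x v = 0)
    (hr : ∀ i ∈ s, ∑ j ∈ s, (A i j : ℝ) * x j = 0) : x = 0 := by
  by_contra h0
  have := quad_neg A hell s x hx 0 (fun i hi => by simpa using hr i hi) h0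
  simp at this

/-- principal submatrix of neg def is neg def -/
lemma negdef_sub (A : Matrix V V ℤ) (hell : NegDefMat (matReal A)) (s : Finset V) :
    NegDefMat (matReal (subMat A s)) := by
  intro x hx0
  classical
  set x' : V → ℝ := fun v => if h : v ∈ s then x ⟨v, h⟩ else 0 with hx'
  have hxv : ∀ i : {v // v ∈ s}, x' i.val = x i := by
    intro i; simp [hx']
  have hsupp : ∀ v, v ∉ s → x' v = 0 := by intro v hv; simp [hx', hv]
  have hx'0 : x' ≠ 0 := by
    intro hz
    apply hx0
    funext i
    have := congrFun hz i.val
    rw [hxv i] at this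
    simpa using this
  have key : x ⬝ᵥ (matReal (subMat A s)).mulVec x = x' ⬝ᵥ (matReal A).mulVec x' := by
    rw [quad_restrict A s x' hsupp]
    rw [dotProduct]
    rw [← Finset.sum_coe_sort s (fun i => x' i * ∑ j ∈ s, (A i j : ℝ) * x' j)]
    apply Finset.sum_congr rfl
    intro i _
    rw [hxv i, mulVec, dotProduct]
    congr 1
    rw [← Finset.sum_coe_sort s (fun j => (A i.val j : ℝ) * x' j)]
    apply Finset.sum_congr rfl
    intro j _
    rw [hxv j]
    rfl
  rw [key]
  exact hell x' hx'0

/-- neg def implies solvability -/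
lemma negdef_solve {W : Type*} [Fintype W] [DecidableEq W] (B : Matrix W W ℝ)
    (hB : NegDefMat B) (g : W → ℝ) : ∃ x, B.mulVec x = g := by
  have hinj : Function.Injective B.mulVecLin := by
    rw [← LinearMap.ker_eq_bot]
    rw [LinearMap.ker_eq_bot']
    intro y hy
    by_contra hy0
    have := hB y hy0
    rw [show B.mulVec y = 0 from hy] at this
    simp at this
  have hsurj := LinearMap.injective_iff_surjective.mp hinj
  obtain ⟨x, hx⟩ := hsurj g
  exact ⟨x, hx⟩


lemma main_alpha (A : Matrix V V ℤ) (hell : IsElliptic A)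
    (hlc : IsLogCanonical A) (s : Finset V)
    (hnd : NegDefMat (matReal (subMat A s))) :
    ∃ α : V → ℝ,
      (∀ i ∈ s, ∑ j ∈ s, (A i j : ℝ) * α j = -(A i i : ℝ) - 2) ∧
      (∀ i ∈ s, -1 ≤ α i) ∧
      (∀ i ∈ s, A i i = -1 → -1 < α i) ∧
      (∀ i ∈ s, ∀ e ∈ s, A e e = -1 → i ≠ e → 0 < A i e → -1 < α i) := by
  classical
  obtain ⟨α₀, hα₀⟩ := negdef_solve (matReal (subMat A s)) hnd
      (fun i => -(A i.val i.val : ℝ) - 2)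
  set α : V → ℝ := fun v => if h : v ∈ s then α₀ ⟨v, h⟩ else 0 with hα
  have hαv : ∀ i : {v // v ∈ s}, α i.val = α₀ i := fun i => by simp [hα]
  have heq : ∀ i ∈ s, ∑ j ∈ s, (A i j : ℝ) * α j = -(A i i : ℝ) - 2 := by
    intro i hi
    have := congrFun hα₀ ⟨i, hi⟩
    rw [mulVec, dotProduct] at this
    calc ∑ j ∈ s, (A i j : ℝ) * α j
        = ∑ j : {v // v ∈ s}, (A i j.val : ℝ) * α j.val :=
          (Finset.sum_coe_sort s (fun j => (A i j : ℝ) * α j)).symm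
      _ = ∑ j : {v // v ∈ s}, matReal (subMat A s) ⟨i, hi⟩ j * α₀ j := by
          apply Finset.sum_congr rfl; intro j _; rw [hαv j]; rfl
      _ = -(A i i : ℝ) - 2 := this
  obtain ⟨h1, h2⟩ := hlc s hnd α heq
  refine ⟨α, heq, h1, ?_, ?_⟩
  · intro i hi hAii
    exact h2 ⟨i, hi⟩ ⟨i, hi⟩ hAii (SimpleGraph.Reachable.refl _)
  · intro i hi e he hAee hne hpos
    refine h2 ⟨i, hi⟩ ⟨e, he⟩ hAee ?_
    apply SimpleGraph.Adj.reachable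
    rw [SimpleGraph.comap_adj]
    rw [sysGraph, SimpleGraph.fromRel_adj]
    exact ⟨hne, Or.inl hpos⟩

lemma pair_facts (A : Matrix V V ℤ) (hsym : ∀ a b : V, A b a = A a b)
    (hdiag : ∀ i, A i i ≤ -1)
    (hell : IsElliptic A) (hlc : IsLogCanonical A) {i j : V} (hij : i ≠ j) :
    A i j ≤ 2 ∧ (A i j = 2 → A i i ≤ -2) := by
  classical
  set s : Finset V := {i, j} with hs
  have hmi : i ∈ s := by simp [hs]
  have hmj : j ∈ s := by simp [hs]
  obtain ⟨α, heq, hge, hstrict, _⟩ := main_alpha A hell hlc s (negdef_sub A hell s)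
  have hp0 : 0 ≤ α i + 1 := by have := hge i hmi; linarith
  have hq0 : 0 ≤ α j + 1 := by have := hge j hmj; linarith
  have expand : ∀ t : V, ∑ j' ∈ s, (A t j' : ℝ) * α j'
      = (A t i : ℝ) * α i + (A t j : ℝ) * α j := by
    intro t
    rw [hs, Finset.sum_insert (by simp [hij]), Finset.sum_singleton]
  have h1 : (A i i : ℝ) * (α i + 1) + (A i j : ℝ) * (α j + 1) = (A i j : ℝ) - 2 := by
    have := heq i hmi; rw [expand i] at this; linarith
  have h2 : (A i j : ℝ) * (α i + 1) + (A j j : ℝ) * (α j + 1) = (A i j : ℝ) - 2 := by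
    have := heq j hmj; rw [expand j, hsym i j] at this
    have hji : (A j i : ℝ) = (A i j : ℝ) := by rw [hsym i j]
    linarith
  set x : V → ℝ := fun v => if v = i then α i + 1 else if v = j then α j + 1 else 0 with hx
  have hxi : x i = α i + 1 := by simp [hx]
  have hxj : x j = α j + 1 := by simp [hx, hij.symm]
  have hsupp : ∀ v, v ∉ s → x v = 0 := by
    intro v hv
    rw [hs] at hv; simp at hv
    simp [hx, hv.1, hv.2]
  have key : ∀ (_ : (2:ℝ) ≤ (A i j : ℝ)), (A i j : ℝ) = 2 ∧ α i + 1 = 0 := by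
    intro hc2
    by_cases hxz : x = 0
    · have hpz : α i + 1 = 0 := by rw [← hxi, hxz]; rfl
      have hqz : α j + 1 = 0 := by rw [← hxj, hxz]; rfl
      refine ⟨?_, hpz⟩
      rw [hpz, hqz] at h1; linarith
    · exfalso
      have hneg := quad_neg A hell s x hsupp (fun _ => (A i j : ℝ) - 2) ?_ hxz
      · rw [hs, Finset.sum_insert (by simp [hij]), Finset.sum_singleton, hxi, hxj] at hneg
        nlinarith
      · intro t ht
        have hrt : ∑ j' ∈ s, (A t j' : ℝ) * x j' = (A t i : ℝ) * (α i + 1) + (A t j : ℝ) * (α j + 1) := by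
          rw [hs, Finset.sum_insert (by simp [hij]), Finset.sum_singleton, hxi, hxj]
        rw [hrt]
        rw [hs] at ht; simp at ht
        rcases ht with h | h
        · rw [h]; exact h1
        · rw [h]
          have hji : (A j i : ℝ) = (A i j : ℝ) := by rw [hsym i j]
          rw [hji]; exact h2
  constructor
  · by_contra hgt
    push_neg at hgt
    have hc : (3:ℝ) ≤ (A i j : ℝ) := by exact_mod_cast hgt
    have := (key (by linarith)).1
    linarith
  · intro hc2
    by_contra hgt
    have haii : A i i = -1 := by have := hdiag i; omega
    have hcr : (A i j : ℝ) = 2 := by exact_mod_cast hc2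
    obtain ⟨_, hpz⟩ := key (le_of_eq hcr.symm)
    have := hstrict i hmi haii
    linarith

lemma triple_fact (A : Matrix V V ℤ) (hsym : ∀ a b : V, A b a = A a b)
    (hdiag : ∀ i, A i i ≤ -1) (hoff : ∀ i j : V, i ≠ j → 0 ≤ A i j)
    (hell : IsElliptic A) (hlc : IsLogCanonical A) {i j k : V}
    (hij : i ≠ j) (hik : i ≠ k) (hjk : j ≠ k) (h2 : A i j = 2) :
    A i k = 0 := by
  classical
  by_contra hPne
  have hPz : 1 ≤ A i k := by have := hoff i k hik; omega
  have hQz : 0 ≤ A j k := hoff j k hjk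
  have ha : A i i ≤ -2 := (pair_facts A hsym hdiag hell hlc hij).2 h2
  have hb : A j j ≤ -2 := by
    refine (pair_facts A hsym hdiag hell hlc hij.symm).2 ?_
    rw [hsym i j]; exact h2
  set s : Finset V := {i, j, k} with hs
  have hmi : i ∈ s := by simp [hs]
  have hmj : j ∈ s := by simp [hs]
  have hmk : k ∈ s := by simp [hs]
  obtain ⟨α, heq, hge, hstrict, hedge⟩ := main_alpha A hell hlc s (negdef_sub A hell s)
  have hpi0 : 0 ≤ α i + 1 := by have := hge i hmi; linarith
  have hpj0 : 0 ≤ α j + 1 := by have := hge j hmj; linarith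
  have hpk0 : 0 ≤ α k + 1 := by have := hge k hmk; linarith
  have expand : ∀ (f : V → ℝ), ∑ j' ∈ s, f j' = f i + f j + f k := by
    intro f
    rw [hs, Finset.sum_insert (by simp [hij, hik]),
      Finset.sum_insert (by simp [hjk]), Finset.sum_singleton, add_assoc]
  -- abbreviations as real equations
  have hji : (A j i : ℝ) = 2 := by rw [hsym i j]; exact_mod_cast h2
  have hijr : (A i j : ℝ) = 2 := by exact_mod_cast h2
  have hki : (A k i : ℝ) = (A i k : ℝ) := by rw [hsym i k]
  have hkj : (A k j : ℝ) = (A j k : ℝ) := by rw [hsym j k]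
  have R1 : (A i i : ℝ) * (α i + 1) + 2 * (α j + 1) + (A i k : ℝ) * (α k + 1)
      = (A i k : ℝ) := by
    have := heq i hmi; rw [expand] at this; rw [hijr] at this; linarith
  have R2 : 2 * (α i + 1) + (A j j : ℝ) * (α j + 1) + (A j k : ℝ) * (α k + 1)
      = (A j k : ℝ) := by
    have := heq j hmj; rw [expand] at this; rw [hji] at this; linarith
  have R3 : (A i k : ℝ) * (α i + 1) + (A j k : ℝ) * (α j + 1) + (A k k : ℝ) * (α k + 1)
      = (A i k : ℝ) + (A j k : ℝ) - 2 := by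
    have := heq k hmk; rw [expand] at this; rw [hki, hkj] at this; linarith
  have hP1 : (1:ℝ) ≤ (A i k : ℝ) := by exact_mod_cast hPz
  have hQ0 : (0:ℝ) ≤ (A j k : ℝ) := by exact_mod_cast hQz
  have ha2 : (A i i : ℝ) + 2 ≤ 0 := by
    have : ((A i i : ℤ) : ℝ) ≤ ((-2 : ℤ) : ℝ) := by exact_mod_cast ha
    push_cast at this; linarith
  have hb2 : (A j j : ℝ) + 2 ≤ 0 := by
    have : ((A j j : ℤ) : ℝ) ≤ ((-2 : ℤ) : ℝ) := by exact_mod_cast hb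
    push_cast at this; linarith
  -- βk ≥ 1
  have hpk1 : 1 ≤ α k + 1 := by
    have hsum : ((A i i : ℝ) + 2) * (α i + 1) + ((A j j : ℝ) + 2) * (α j + 1)
        + ((A i k : ℝ) + (A j k : ℝ)) * (α k + 1) = (A i k : ℝ) + (A j k : ℝ) := by
      linarith [R1, R2]
    nlinarith [mul_nonpos_of_nonpos_of_nonneg ha2 hpi0,
      mul_nonpos_of_nonpos_of_nonneg hb2 hpj0,
      mul_pos (lt_of_lt_of_le one_pos (by linarith : (1:ℝ) ≤ (A i k : ℝ) + (A j k : ℝ)))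
        (by linarith : (0:ℝ) < 1)]
  -- the β test vector
  set x : V → ℝ := fun v => if v = i then α i + 1 else if v = j then α j + 1
      else if v = k then α k + 1 else 0 with hx
  have hxi : x i = α i + 1 := by simp [hx]
  have hxj : x j = α j + 1 := by simp [hx, hij.symm]
  have hxk : x k = α k + 1 := by simp [hx, hik.symm, hjk.symm]
  have hsupp : ∀ v, v ∉ s → x v = 0 := by
    intro v hv
    rw [hs] at hv; simp at hv
    simp [hx, hv.1, hv.2.1, hv.2.2]
  have hxne : x ≠ 0 := by
    intro hz
    have : x k = 0 := by rw [hz]; rfl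
    rw [hxk] at this; linarith
  set r : V → ℝ := fun v => if v = i then (A i k : ℝ) else if v = j then (A j k : ℝ)
      else (A i k : ℝ) + (A j k : ℝ) - 2 with hr
  have hrows : ∀ t ∈ s, ∑ j' ∈ s, (A t j' : ℝ) * x j' = r t := by
    intro t ht
    have hexp : ∑ j' ∈ s, (A t j' : ℝ) * x j'
        = (A t i : ℝ) * (α i + 1) + (A t j : ℝ) * (α j + 1) + (A t k : ℝ) * (α k + 1) := by
      rw [expand (fun j' => (A t j' : ℝ) * x j'), hxi, hxj, hxk]
    rw [hs] at ht; simp at ht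
    rcases ht with h | h | h
    · rw [h] at hexp ⊢
      rw [hexp, hr]; simp [hij, hik]
      rw [hijr]; linarith [R1]
    · rw [h] at hexp ⊢
      rw [hexp, hr]; simp [hij.symm, hjk]
      rw [hji]; linarith [R2]
    · rw [h] at hexp ⊢
      rw [hexp, hr]; simp [hik.symm, hjk.symm]
      rw [hki, hkj]; linarith [R3]
  have hQlt := quad_neg A hell s x hsupp r hrows hxne
  rw [expand (fun v => x v * r v), hxi, hxj, hxk] at hQlt
  have hri : r i = (A i k : ℝ) := by rw [hr]; simp
  have hrj : r j = (A j k : ℝ) := by rw [hr]; simp [hij.symm]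
  have hrk : r k = (A i k : ℝ) + (A j k : ℝ) - 2 := by rw [hr]; simp [hik.symm, hjk.symm]
  rw [hri, hrj, hrk] at hQlt
  -- case split
  by_cases hcase : 2 ≤ A i k + A j k
  · have hc2 : (2:ℝ) ≤ (A i k : ℝ) + (A j k : ℝ) := by exact_mod_cast hcase
    nlinarith [mul_nonneg hpi0 (by linarith : (0:ℝ) ≤ (A i k : ℝ)),
      mul_nonneg hpj0 hQ0,
      mul_nonneg (by linarith : (0:ℝ) ≤ α k + 1) (by linarith : (0:ℝ) ≤ (A i k : ℝ) + (A j k : ℝ) - 2)]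
  · -- A i k = 1, A j k = 0
    have hPQ : A i k = 1 ∧ A j k = 0 := by omega
    obtain ⟨hP1', hQ0'⟩ := hPQ
    have hPr : (A i k : ℝ) = 1 := by exact_mod_cast hP1'
    have hQr : (A j k : ℝ) = 0 := by exact_mod_cast hQ0'
    rw [hPr] at R1 R3 hQlt
    rw [hQr] at R2 R3 hQlt
    -- now R2 : 2βi + b βj = 0 ;  R3 : βi + d βk = -1
    by_cases hd : A k k ≤ -2
    · have hdr : (A k k : ℝ) ≤ -2 := by exact_mod_cast hd
      -- βi ≥ 2βk - 1 ≥ βk ;  Q = βi - βk ≥ 0 contra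
      nlinarith [mul_le_mul_of_nonneg_right hdr hpk0]
    · have hdkk : A k k = -1 := by have := hdiag k; omega
      have hdr : (A k k : ℝ) = -1 := by exact_mod_cast hdkk
      rw [hdr] at R3
      -- strictness: βi > 0
      have hpi : 0 < α i + 1 := by
        have := hedge i hmi k hmk hdkk hik (by omega)
        linarith
      -- derive b(a+1) = 4
      have hlin1 : ((A i i : ℝ) + 1) * (α i + 1) + 2 * (α j + 1) = 0 := by linarith
      have hkey : (α i + 1) * (((A i i : ℝ) + 1) * (A j j : ℝ) - 4) = 0 := by
        linear_combination (A j j : ℝ) * hlin1 - 2 * R2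
      have hab : ((A i i : ℝ) + 1) * (A j j : ℝ) = 4 := by
        rcases mul_eq_zero.mp hkey with h | h
        · exfalso; linarith
        · linarith
      -- kernel vector
      have hbne : (A j j : ℝ) ≠ 0 := ne_of_lt (by linarith : (A j j : ℝ) < 0)
      set z : V → ℝ := fun v => if v = i then 1 else if v = j then -2 / (A j j : ℝ)
          else if v = k then 1 else 0 with hz
      have hzi : z i = 1 := by simp [hz]
      have hzj : z j = -2 / (A j j : ℝ) := by simp [hz, hij.symm]
      have hzk : z k = 1 := by simp [hz, hik.symm, hjk.symm]
      have hzsupp : ∀ v, v ∉ s → z v = 0 := by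
        intro v hv
        rw [hs] at hv; simp at hv
        simp [hz, hv.1, hv.2.1, hv.2.2]
      have hzrows : ∀ t ∈ s, ∑ j' ∈ s, (A t j' : ℝ) * z j' = 0 := by
        intro t ht
        have hexp : ∑ j' ∈ s, (A t j' : ℝ) * z j'
            = (A t i : ℝ) * 1 + (A t j : ℝ) * (-2 / (A j j : ℝ)) + (A t k : ℝ) * 1 := by
          rw [expand (fun j' => (A t j' : ℝ) * z j'), hzi, hzj, hzk]
        rw [hs] at ht; simp at ht
        rcases ht with h | h | h
        · rw [h] at hexp ⊢
          rw [hexp, hijr, hPr]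
          field_simp
          linear_combination hab
        · rw [h] at hexp ⊢
          rw [hexp, hji, hQr]
          field_simp
          ring
        · rw [h] at hexp ⊢
          rw [hexp, hki, hkj, hPr, hQr, hdr]
          ring
      have hz0 := quad_zero A hell s z hzsupp hzrows
      have : z i = 0 := by rw [hz0]; rfl
      rw [hzi] at this; linarith

lemma entry_le_one (A : Matrix V V ℤ) (hsym : ∀ a b : V, A b a = A a b)
    (hdiag : ∀ i, A i i ≤ -1)
    (hell : IsElliptic A) (hlc : IsLogCanonical A) {i j : V} (hij : i ≠ j)
    (h1 : A i i = -1) : A i j ≤ 1 := by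
  obtain ⟨hle2, him⟩ := pair_facts A hsym hdiag hell hlc hij
  by_contra h
  have : A i j = 2 := by omega
  have := him this
  omega

lemma star_fact (A : Matrix V V ℤ) (hsym : ∀ a b : V, A b a = A a b)
    (hdiag : ∀ i, A i i ≤ -1) (hoff : ∀ i j : V, i ≠ j → 0 ≤ A i j)
    (hell : IsElliptic A) (hlc : IsLogCanonical A) {i j k l : V}
    (h1 : A i i = -1) (hij : i ≠ j) (hik : i ≠ k) (hil : i ≠ l)
    (hjk : j ≠ k) (hjl : j ≠ l) (hkl : k ≠ l)
    (haj : 0 < A i j) (hak : 0 < A i k) (hal : 0 < A i l) : False := by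
  classical
  have hAij : A i j = 1 := by
    have := entry_le_one A hsym hdiag hell hlc hij h1; omega
  have hAik : A i k = 1 := by
    have := entry_le_one A hsym hdiag hell hlc hik h1; omega
  have hAil : A i l = 1 := by
    have := entry_le_one A hsym hdiag hell hlc hil h1; omega
  set s : Finset V := {i, j, k, l} with hs
  have hmi : i ∈ s := by simp [hs]
  have hmj : j ∈ s := by simp [hs]
  have hmk : k ∈ s := by simp [hs]
  have hml : l ∈ s := by simp [hs]
  obtain ⟨α, heq, hge, _, _⟩ := main_alpha A hell hlc s (negdef_sub A hell s)
  have expand : ∀ (f : V → ℝ), ∑ j' ∈ s, f j' = f i + (f j + (f k + f l)) := by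
    intro f
    rw [hs, Finset.sum_insert (by simp [hij, hik, hil]),
      Finset.sum_insert (by simp [hjk, hjl]), Finset.sum_insert (by simp [hkl]),
      Finset.sum_singleton]
  -- cast facts
  have hiir : (A i i : ℝ) = -1 := by exact_mod_cast h1
  have hijr : (A i j : ℝ) = 1 := by exact_mod_cast hAij
  have hikr : (A i k : ℝ) = 1 := by exact_mod_cast hAik
  have hilr : (A i l : ℝ) = 1 := by exact_mod_cast hAil
  have hjir : (A j i : ℝ) = 1 := by rw [hsym i j]; exact hijr
  have hkir : (A k i : ℝ) = 1 := by rw [hsym i k]; exact hikr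
  have hlir : (A l i : ℝ) = 1 := by rw [hsym i l]; exact hilr
  have hkjr : (A k j : ℝ) = (A j k : ℝ) := by rw [hsym j k]
  have hljr : (A l j : ℝ) = (A j l : ℝ) := by rw [hsym j l]
  have hlkr : (A l k : ℝ) = (A k l : ℝ) := by rw [hsym k l]
  have hu1 : (0:ℝ) ≤ (A j k : ℝ) := by exact_mod_cast hoff j k hjk
  have hu2 : (0:ℝ) ≤ (A j l : ℝ) := by exact_mod_cast hoff j l hjl
  have hu3 : (0:ℝ) ≤ (A k l : ℝ) := by exact_mod_cast hoff k l hkl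
  -- test vector x = β + e_i
  set x : V → ℝ := fun v => if v = i then α i + 2 else if v = j then α j + 1
      else if v = k then α k + 1 else if v = l then α l + 1 else 0 with hx
  have hxi : x i = α i + 2 := by simp [hx]
  have hxj : x j = α j + 1 := by simp [hx, hij.symm]
  have hxk : x k = α k + 1 := by simp [hx, hik.symm, hjk.symm]
  have hxl : x l = α l + 1 := by simp [hx, hil.symm, hjl.symm, hkl.symm]
  have hsupp : ∀ v, v ∉ s → x v = 0 := by
    intro v hv
    rw [hs] at hv; simp at hv
    simp [hx, hv.1, hv.2.1, hv.2.2.1, hv.2.2.2]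
  have hxne : x ≠ 0 := by
    intro hz
    have : x i = 0 := by rw [hz]; rfl
    rw [hxi] at this
    have := hge i hmi
    linarith
  set r : V → ℝ := fun v => if v = i then 0 else if v = j then (A j k : ℝ) + (A j l : ℝ)
      else if v = k then (A j k : ℝ) + (A k l : ℝ) else (A j l : ℝ) + (A k l : ℝ) with hr
  have hri : r i = 0 := by rw [hr]; simp
  have hrj : r j = (A j k : ℝ) + (A j l : ℝ) := by rw [hr]; simp [hij.symm]
  have hrk : r k = (A j k : ℝ) + (A k l : ℝ) := by rw [hr]; simp [hik.symm, hjk.symm]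
  have hrl : r l = (A j l : ℝ) + (A k l : ℝ) := by rw [hr]; simp [hil.symm, hjl.symm, hkl.symm]
  have hrows : ∀ t ∈ s, ∑ j' ∈ s, (A t j' : ℝ) * x j' = r t := by
    intro t ht
    have hexp : ∑ j' ∈ s, (A t j' : ℝ) * x j'
        = (A t i : ℝ) * (α i + 2) + ((A t j : ℝ) * (α j + 1)
          + ((A t k : ℝ) * (α k + 1) + (A t l : ℝ) * (α l + 1))) := by
      rw [expand (fun j' => (A t j' : ℝ) * x j'), hxi, hxj, hxk, hxl]
    rw [hs] at ht; simp at ht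
    rcases ht with h | h | h | h
    · rw [h] at hexp ⊢
      rw [hexp, hri]
      have he := heq i hmi; rw [expand] at he
      rw [hiir] at he ⊢
      rw [hijr, hikr, hilr] at he ⊢
      linarith
    · rw [h] at hexp ⊢
      rw [hexp, hrj]
      have he := heq j hmj; rw [expand] at he
      rw [hjir] at he ⊢
      linarith
    · rw [h] at hexp ⊢
      rw [hexp, hrk]
      have he := heq k hmk; rw [expand] at he
      rw [hkir, hkjr] at he ⊢
      linarith
    · rw [h] at hexp ⊢
      rw [hexp, hrl]
      have he := heq l hml; rw [expand] at he
      rw [hlir, hljr, hlkr] at he ⊢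
      linarith
  have hQlt := quad_neg A hell s x hsupp r hrows hxne
  rw [expand (fun v => x v * r v), hxi, hxj, hxk, hxl, hri, hrj, hrk, hrl] at hQlt
  have b1 : 0 ≤ α j + 1 := by have := hge j hmj; linarith
  have b2 : 0 ≤ α k + 1 := by have := hge k hmk; linarith
  have b3 : 0 ≤ α l + 1 := by have := hge l hml; linarith
  nlinarith [mul_nonneg b1 (by linarith : (0:ℝ) ≤ (A j k : ℝ) + (A j l : ℝ)),
    mul_nonneg b2 (by linarith : (0:ℝ) ≤ (A j k : ℝ) + (A k l : ℝ)),
    mul_nonneg b3 (by linarith : (0:ℝ) ≤ (A j l : ℝ) + (A k l : ℝ))]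

end Aux

section Cycle

variable {k : ℕ}

lemma zmod_facts (hk : 3 ≤ k) :
    ∀ t : ZMod k, t ≠ t - 1 ∧ t ≠ t + 1 ∧ t - 1 ≠ t + 1 := by
  haveI : NeZero k := ⟨by omega⟩
  have h1 : (1 : ZMod k) ≠ 0 := by
    intro h
    have : ((1:ℕ) : ZMod k) = 0 := by exact_mod_cast h
    rw [ZMod.natCast_eq_zero_iff] at this
    have := Nat.le_of_dvd one_pos this
    omega
  have h2 : (2 : ZMod k) ≠ 0 := by
    intro h
    have : ((2:ℕ) : ZMod k) = 0 := by exact_mod_cast h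
    rw [ZMod.natCast_eq_zero_iff] at this
    have := Nat.le_of_dvd two_pos this
    omega
  intro t
  refine ⟨?_, ?_, ?_⟩
  · intro h
    apply h1
    linear_combination h
  · intro h
    apply h1
    linear_combination -h
  · intro h
    apply h2
    linear_combination -h

lemma cycle_entries {V : Type*} [Fintype V] [DecidableEq V]
    (A : Matrix V V ℤ) (hsym : ∀ a b : V, A b a = A a b)
    (hdiag : ∀ i, A i i ≤ -1) (hoff : ∀ i j : V, i ≠ j → 0 ≤ A i j)
    (hell : IsElliptic A) (hlc : IsLogCanonical A)
    (hk : 3 ≤ k) (c : ZMod k → V) (hc : Function.Injective c)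
    (hadj : ∀ t, 0 < A (c t) (c (t + 1))) :
    (∀ t, A (c t) (c (t + 1)) = 1) ∧
    (∀ t u : ZMod k, u ≠ t → u ≠ t - 1 → u ≠ t + 1 → A (c t) (c u) = 0) ∧
    (∀ t, A (c t) (c t) ≤ -2) := by
  classical
  haveI : NeZero k := ⟨by omega⟩
  set s : Finset V := Finset.image c Finset.univ with hs
  have hmem : ∀ t, c t ∈ s := fun t => Finset.mem_image_of_mem c (Finset.mem_univ t)
  have himg : ∀ f : V → ℝ, ∑ v ∈ s, f v = ∑ t : ZMod k, f (c t) := by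
    intro f
    rw [hs]
    exact Finset.sum_image (fun x _ y _ h => hc h)
  -- splitting of ZMod sums
  have hsplit : ∀ (t : ZMod k) (g : ZMod k → ℝ),
      ∑ u : ZMod k, g u
      = ∑ u ∈ Finset.univ \ {t, t - 1, t + 1}, g u + (g t + g (t-1) + g (t+1)) := by
    intro t g
    obtain ⟨n1, n2, n3⟩ := zmod_facts hk t
    rw [← Finset.sum_sdiff (Finset.subset_univ {t, t - 1, t + 1})]
    congr 1
    rw [Finset.sum_insert (by simp [n1, n2]), Finset.sum_insert (by simp [n3]),
      Finset.sum_singleton]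
    ring
  have hadj' : ∀ t : ZMod k, 0 < A (c t) (c (t - 1)) := by
    intro t
    have := hadj (t - 1)
    rw [sub_add_cancel] at this
    rw [hsym]
    exact this
  -- canonical coefficients
  obtain ⟨α, heq, hge, hstrict, _⟩ := main_alpha A hell hlc s (negdef_sub A hell s)
  set β : V → ℝ := fun v => if v ∈ s then α v + 1 else 0 with hβ
  have hβmem : ∀ v ∈ s, β v = α v + 1 := by
    intro v h; simp only [hβ, if_pos h]
  have hβsupp : ∀ v, v ∉ s → β v = 0 := by
    intro v h; simp only [hβ, if_neg h]
  have hβ0 : ∀ v, 0 ≤ β v := by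
    intro v
    by_cases h : v ∈ s
    · rw [hβmem v h]; have := hge v h; linarith
    · rw [hβsupp v h]
  set R : V → ℝ := fun v => (∑ j ∈ s, (A v j : ℝ)) - (A v v : ℝ) - 2 with hR
  have hrowβ : ∀ i ∈ s, ∑ j ∈ s, (A i j : ℝ) * β j = R i := by
    intro i hi
    have : ∑ j ∈ s, (A i j : ℝ) * β j = ∑ j ∈ s, ((A i j : ℝ) * α j + (A i j : ℝ)) := by
      apply Finset.sum_congr rfl
      intro j hj
      rw [hβmem j hj]
      ring
    rw [this, Finset.sum_add_distrib, heq i hi, hR]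
    ring
  -- nonnegativity of R on the cycle
  have hoffR : ∀ (t u : ZMod k), u ≠ t → (0:ℝ) ≤ (A (c t) (c u) : ℝ) := by
    intro t u hut
    exact_mod_cast hoff (c t) (c u) (fun h => hut (hc h.symm))
  have hRval : ∀ t : ZMod k, R (c t)
      = ∑ u ∈ Finset.univ \ {t, t - 1, t + 1}, (A (c t) (c u) : ℝ)
        + ((A (c t) (c (t-1)) : ℝ) + (A (c t) (c (t+1)) : ℝ)) - 2 := by
    intro t
    rw [hR]
    simp only
    rw [himg (fun j => (A (c t) j : ℝ)), hsplit t]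
    ring
  have hR0 : ∀ t : ZMod k, 0 ≤ R (c t) := by
    intro t
    obtain ⟨n1, n2, n3⟩ := zmod_facts hk t
    rw [hRval t]
    have hS : 0 ≤ ∑ u ∈ Finset.univ \ {t, t - 1, t + 1}, (A (c t) (c u) : ℝ) := by
      apply Finset.sum_nonneg
      intro u hu
      simp at hu
      exact hoffR t u (fun h => hu.1 h)
    have e1 : (1:ℝ) ≤ (A (c t) (c (t-1)) : ℝ) := by
      have := hadj' t; exact_mod_cast this
    have e2 : (1:ℝ) ≤ (A (c t) (c (t+1)) : ℝ) := by
      have := hadj t; exact_mod_cast this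
    linarith
  -- β must vanish
  have hβz : β = 0 := by
    by_contra hne
    have := quad_neg A hell s β hβsupp R hrowβ hne
    rw [himg (fun v => β v * R v)] at this
    have : (0:ℝ) ≤ ∑ t : ZMod k, β (c t) * R (c t) :=
      Finset.sum_nonneg fun t _ => mul_nonneg (hβ0 _) (hR0 t)
    linarith [quad_neg A hell s β hβsupp R hrowβ hne,
      (himg (fun v => β v * R v)) ▸ this]
  have hRz : ∀ t : ZMod k, R (c t) = 0 := by
    intro t
    have := hrowβ (c t) (hmem t)
    rw [hβz] at this
    simp at this
    exact this.symm
  -- extract entries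
  have hkey : ∀ t : ZMod k,
      ∑ u ∈ Finset.univ \ {t, t - 1, t + 1}, (A (c t) (c u) : ℝ) = 0
      ∧ (A (c t) (c (t-1)) : ℝ) = 1 ∧ (A (c t) (c (t+1)) : ℝ) = 1 := by
    intro t
    obtain ⟨n1, n2, n3⟩ := zmod_facts hk t
    have hz := hRz t
    rw [hRval t] at hz
    have hS : 0 ≤ ∑ u ∈ Finset.univ \ {t, t - 1, t + 1}, (A (c t) (c u) : ℝ) := by
      apply Finset.sum_nonneg
      intro u hu
      simp at hu
      exact hoffR t u (fun h => hu.1 h)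
    have e1 : (1:ℝ) ≤ (A (c t) (c (t-1)) : ℝ) := by
      have := hadj' t; exact_mod_cast this
    have e2 : (1:ℝ) ≤ (A (c t) (c (t+1)) : ℝ) := by
      have := hadj t; exact_mod_cast this
    refine ⟨by linarith, by linarith, by linarith⟩
  refine ⟨?_, ?_, ?_⟩
  · intro t
    have := (hkey t).2.2
    exact_mod_cast this
  · intro t u hu1 hu2 hu3
    have hz := (hkey t).1
    rw [Finset.sum_eq_zero_iff_of_nonneg] at hz
    · have := hz u (by simp [hu1, hu2, hu3])
      exact_mod_cast this
    · intro u' hu'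
      simp at hu'
      exact hoffR t u' (fun h => hu'.1 h)
  · intro t
    by_contra h
    have hd : A (c t) (c t) = -1 := by have := hdiag (c t); omega
    have := hstrict (c t) (hmem t) hd
    have hb := congrFun hβz (c t)
    rw [hβ] at hb
    simp only [if_pos (hmem t)] at hb
    simp at hb
    linarith

lemma cycle_step {V : Type*} [Fintype V] [DecidableEq V]
    (A : Matrix V V ℤ) (hsym : ∀ a b : V, A b a = A a b)
    (hdiag : ∀ i, A i i ≤ -1) (hoff : ∀ i j : V, i ≠ j → 0 ≤ A i j)
    (hell : IsElliptic A) (hlc : IsLogCanonical A)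
    {k : ℕ} (hk : 3 ≤ k) (c : ZMod k → V) (hc : Function.Injective c)
    (hadj : ∀ t, 0 < A (c t) (c (t + 1)))
    (t₀ : ZMod k) (v : V) (hv : ∀ u, v ≠ c u) (hpos : 0 < A (c t₀) v) : False := by
  classical
  haveI : NeZero k := ⟨by omega⟩
  obtain ⟨e1, e2, e3⟩ := cycle_entries A hsym hdiag hoff hell hlc hk c hc hadj
  have e1' : ∀ u : ZMod k, A (c u) (c (u - 1)) = 1 := by
    intro u
    have := e1 (u - 1)
    rw [sub_add_cancel] at this
    rw [hsym]; exact this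
  -- sum of a cycle row over the cycle
  have hsplit : ∀ (t : ZMod k) (g : ZMod k → ℝ),
      ∑ u : ZMod k, g u
      = ∑ u ∈ Finset.univ \ {t, t - 1, t + 1}, g u + (g t + g (t-1) + g (t+1)) := by
    intro t g
    obtain ⟨n1, n2, n3⟩ := zmod_facts hk t
    rw [← Finset.sum_sdiff (Finset.subset_univ {t, t - 1, t + 1})]
    congr 1
    rw [Finset.sum_insert (by simp [n1, n2]), Finset.sum_insert (by simp [n3]),
      Finset.sum_singleton]
    ring
  have SumAux : ∀ u : ZMod k, ∑ x : ZMod k, (A (c u) (c x) : ℝ)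
      = (A (c u) (c u) : ℝ) + 2 := by
    intro u
    rw [hsplit u]
    have hz : ∑ x ∈ Finset.univ \ {u, u - 1, u + 1}, (A (c u) (c x) : ℝ) = 0 := by
      apply Finset.sum_eq_zero
      intro x hx
      simp at hx
      have := e2 u x hx.1 hx.2.1 hx.2.2
      exact_mod_cast this
    have g1 : (A (c u) (c (u-1)) : ℝ) = 1 := by exact_mod_cast e1' u
    have g2 : (A (c u) (c (u+1)) : ℝ) = 1 := by exact_mod_cast e1 u
    rw [hz, g1, g2]
    ring
  -- the extended set
  set s0 : Finset V := Finset.image c Finset.univ with hs0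
  have hmem0 : ∀ u, c u ∈ s0 := fun u => Finset.mem_image_of_mem c (Finset.mem_univ u)
  have hvns : v ∉ s0 := by
    rw [hs0]
    simp only [Finset.mem_image, Finset.mem_univ, true_and]
    rintro ⟨u, hu⟩
    exact hv u hu.symm
  set s : Finset V := insert v s0 with hsdef
  have hmemv : v ∈ s := Finset.mem_insert_self v s0
  have hmemc : ∀ u, c u ∈ s := fun u => Finset.mem_insert_of_mem (hmem0 u)
  have hexp : ∀ f : V → ℝ, ∑ j ∈ s, f j = f v + ∑ u : ZMod k, f (c u) := by
    intro f
    rw [hsdef, Finset.sum_insert hvns, hs0,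
      Finset.sum_image (fun x _ y _ h => hc h)]
  have hcnev : ∀ u, c u ≠ v := fun u h => hv u h.symm
  -- canonical coefficients on s
  obtain ⟨α, heq, hge, hstrict, hedge⟩ := main_alpha A hell hlc s (negdef_sub A hell s)
  set β : V → ℝ := fun x => if x ∈ s then α x + 1 else 0 with hβ
  have hβmem : ∀ x ∈ s, β x = α x + 1 := by
    intro x h; simp only [hβ, if_pos h]
  have hβsupp : ∀ x, x ∉ s → β x = 0 := by
    intro x h; simp only [hβ, if_neg h]
  have hβ0 : ∀ x, 0 ≤ β x := by
    intro x
    by_cases h : x ∈ s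
    · rw [hβmem x h]; have := hge x h; linarith
    · rw [hβsupp x h]
  have hrowβ : ∀ i ∈ s, ∑ j ∈ s, (A i j : ℝ) * β j
      = (∑ j ∈ s, (A i j : ℝ)) - (A i i : ℝ) - 2 := by
    intro i hi
    have : ∑ j ∈ s, (A i j : ℝ) * β j = ∑ j ∈ s, ((A i j : ℝ) * α j + (A i j : ℝ)) := by
      apply Finset.sum_congr rfl
      intro j hj
      rw [hβmem j hj]
      ring
    rw [this, Finset.sum_add_distrib, heq i hi]
    ring
  -- row values
  have hrowc : ∀ u : ZMod k, ∑ j ∈ s, (A (c u) j : ℝ) * β j = (A (c u) v : ℝ) := by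
    intro u
    rw [hrowβ (c u) (hmemc u), hexp (fun j => (A (c u) j : ℝ)), SumAux u]
    ring
  have hrowv : ∑ j ∈ s, (A v j : ℝ) * β j
      = (∑ u : ZMod k, (A v (c u) : ℝ)) - 2 := by
    rw [hrowβ v hmemv, hexp (fun j => (A v j : ℝ))]
    ring
  -- the weight of v towards the cycle
  have hw0 : ∀ u, 0 ≤ A v (c u) := fun u => hoff v (c u) (hv u)
  have hwt0 : 1 ≤ A v (c t₀) := by
    have := hpos
    rw [hsym] at this
    omega
  have hW1 : 1 ≤ ∑ u : ZMod k, A v (c u) := by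
    calc (1:ℤ) ≤ A v (c t₀) := hwt0
      _ ≤ ∑ u : ZMod k, A v (c u) :=
        Finset.single_le_sum (fun u _ => hw0 u) (Finset.mem_univ t₀)
  -- the r-vector for quad_neg
  set r : V → ℝ := fun x => if x = v then (∑ u : ZMod k, (A v (c u) : ℝ)) - 2
      else (A x v : ℝ) with hrdef
  have hrv : r v = (∑ u : ZMod k, (A v (c u) : ℝ)) - 2 := by simp [hrdef]
  have hrc : ∀ u, r (c u) = (A (c u) v : ℝ) := by
    intro u; simp [hrdef, hcnev u]
  have hrows : ∀ i ∈ s, ∑ j ∈ s, (A i j : ℝ) * β j = r i := by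
    intro i hi
    rw [hsdef] at hi
    rcases Finset.mem_insert.mp hi with h | h
    · rw [h, hrv]; exact hrowv
    · rw [hs0] at h
      simp only [Finset.mem_image, Finset.mem_univ, true_and] at h
      obtain ⟨u, hu⟩ := h
      rw [← hu, hrc u]
      exact hrowc u
  by_cases hWcase : 2 ≤ ∑ u : ZMod k, A v (c u)
  · -- total weight at least 2 : β ≥ 0 contradiction with quad form
    have hβne : β ≠ 0 := by
      intro hz
      have h0 := hrowc t₀
      rw [hz] at h0
      simp at h0
      have : (1:ℝ) ≤ (A (c t₀) v : ℝ) := by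
        rw [hsym v (c t₀)]; exact_mod_cast hwt0
      linarith
    have hQ := quad_neg A hell s β hβsupp r hrows hβne
    rw [hexp (fun x => β x * r x), hrv] at hQ
    have hterm : (0:ℝ) ≤ β v * ((∑ u : ZMod k, (A v (c u) : ℝ)) - 2) := by
      apply mul_nonneg (hβ0 v)
      have : (2:ℝ) ≤ ∑ u : ZMod k, (A v (c u) : ℝ) := by exact_mod_cast hWcase
      linarith
    have hterms : (0:ℝ) ≤ ∑ u : ZMod k, β (c u) * r (c u) := by
      apply Finset.sum_nonneg
      intro u _
      rw [hrc u]
      apply mul_nonneg (hβ0 _)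
      rw [hsym v (c u)]
      exact_mod_cast hw0 u
    linarith
  · -- total weight exactly 1
    have hWeq : ∑ u : ZMod k, A v (c u) = 1 := by omega
    have hwt1 : A v (c t₀) = 1 := by
      have hrest : ∑ u ∈ Finset.univ.erase t₀, A v (c u) = 1 - A v (c t₀) := by
        rw [← Finset.add_sum_erase Finset.univ (fun u => A v (c u)) (Finset.mem_univ t₀)] at hWeq
        omega
      have hrest0 : 0 ≤ ∑ u ∈ Finset.univ.erase t₀, A v (c u) :=
        Finset.sum_nonneg fun u _ => hw0 u
      omega
    have hwrest : ∀ u, u ≠ t₀ → A v (c u) = 0 := by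
      intro u hu
      have hrest : ∑ x ∈ Finset.univ.erase t₀, A v (c x) = 0 := by
        rw [← Finset.add_sum_erase Finset.univ (fun x => A v (c x)) (Finset.mem_univ t₀)] at hWeq
        omega
      have := (Finset.sum_eq_zero_iff_of_nonneg (fun x _ => hw0 x)).mp hrest u
        (Finset.mem_erase.mpr ⟨hu, Finset.mem_univ u⟩)
      exact this
    have hWr : (∑ u : ZMod k, (A v (c u) : ℝ)) = 1 := by exact_mod_cast hWeq
    -- useful real casts
    have hwt1r : (A v (c t₀) : ℝ) = 1 := by exact_mod_cast hwt1
    have hwt1r' : (A (c t₀) v : ℝ) = 1 := by rw [hsym v (c t₀)]; exact hwt1r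
    have hwrestr : ∀ u, u ≠ t₀ → (A (c u) v : ℝ) = 0 := by
      intro u hu
      rw [hsym v (c u)]
      exact_mod_cast hwrest u hu
    have hdiagr : ∀ x : ZMod k, (A (c x) (c x) : ℝ) + 2 ≤ 0 := by
      intro x
      have := (cycle_entries A hsym hdiag hoff hell hlc hk c hc hadj).2.2 x
      have : (A (c x) (c x) : ℝ) ≤ -2 := by exact_mod_cast this
      linarith
    -- (a) β v ≥ 1  (valid in both sub-cases)
    have hbv1 : 1 ≤ β v := by
      have hsumrows : ∑ u : ZMod k, (A (c u) v : ℝ) * β v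
          + ∑ u : ZMod k, (∑ x : ZMod k, (A (c u) (c x) : ℝ) * β (c x)) = 1 := by
        have : ∑ u : ZMod k, ((A (c u) v : ℝ) * β v
            + ∑ x : ZMod k, (A (c u) (c x) : ℝ) * β (c x)) = 1 := by
          calc ∑ u : ZMod k, ((A (c u) v : ℝ) * β v
                + ∑ x : ZMod k, (A (c u) (c x) : ℝ) * β (c x))
              = ∑ u : ZMod k, (∑ j ∈ s, (A (c u) j : ℝ) * β j) := by
                apply Finset.sum_congr rfl
                intro u _
                rw [hexp (fun j => (A (c u) j : ℝ) * β j)]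
            _ = ∑ u : ZMod k, (A (c u) v : ℝ) := by
                apply Finset.sum_congr rfl
                intro u _
                exact hrowc u
            _ = ∑ u : ZMod k, (A v (c u) : ℝ) := by
                apply Finset.sum_congr rfl
                intro u _
                rw [hsym v (c u)]
            _ = 1 := hWr
        rw [← Finset.sum_add_distrib]
        exact this
      have hfirst : ∑ u : ZMod k, (A (c u) v : ℝ) * β v = β v := by
        rw [← Finset.sum_mul]
        have : ∑ u : ZMod k, (A (c u) v : ℝ) = 1 := by
          rw [Finset.sum_congr rfl (fun u _ => by rw [hsym v (c u)])]
          exact hWr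
        rw [this, one_mul]
      have hsecond : ∑ u : ZMod k, (∑ x : ZMod k, (A (c u) (c x) : ℝ) * β (c x)) ≤ 0 := by
        rw [Finset.sum_comm]
        apply Finset.sum_nonpos
        intro x _
        rw [← Finset.sum_mul]
        have hcol : ∑ u : ZMod k, (A (c u) (c x) : ℝ) = (A (c x) (c x) : ℝ) + 2 := by
          rw [Finset.sum_congr rfl (fun u _ => by rw [hsym (c x) (c u)])]
          exact SumAux x
        rw [hcol]
        exact mul_nonpos_of_nonpos_of_nonneg (hdiagr x) (hβ0 _)
      linarith
    -- (b) row v : d β v + β (c t₀) = -1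
    have hrowv' : (A v v : ℝ) * β v + β (c t₀) = -1 := by
      have h1 := hrowv
      rw [hexp (fun j => (A v j : ℝ) * β j), hWr] at h1
      have h2 : ∑ u : ZMod k, (A v (c u) : ℝ) * β (c u) = β (c t₀) := by
        rw [Finset.sum_eq_single_of_mem t₀ (Finset.mem_univ t₀)]
        · rw [hwt1r, one_mul]
        · intro x _ hx
          have : (A v (c x) : ℝ) = 0 := by exact_mod_cast hwrest x hx
          rw [this, zero_mul]
      rw [h2] at h1
      linarith
    have hβne : β ≠ 0 := by
      intro hz
      have : β v = 0 := by rw [hz]; rfl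
      linarith
    by_cases hdv : A v v ≤ -2
    · -- heavy pendant : quadratic form contradiction
      have hdvr : (A v v : ℝ) ≤ -2 := by exact_mod_cast hdv
      have hQ := quad_neg A hell s β hβsupp r hrows hβne
      rw [hexp (fun x => β x * r x), hrv, hWr] at hQ
      have hterms : ∑ u : ZMod k, β (c u) * r (c u) = β (c t₀) := by
        rw [Finset.sum_eq_single_of_mem t₀ (Finset.mem_univ t₀)]
        · rw [hrc t₀, hwt1r', mul_one]
        · intro x _ hx
          rw [hrc x, hwrestr x hx, mul_zero]
      rw [hterms] at hQ
      -- hQ : β v * (1 - 2) + β (c t₀) < 0, but β (c t₀) = -1 - d β v ≥ 2 β v - 1 ≥ β v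
      nlinarith [mul_le_mul_of_nonneg_right hdvr (hβ0 v)]
    · -- light pendant : kernel vector / strictness contradiction
      have hdv1 : A v v = -1 := by have := hdiag v; omega
      have hdvr : (A v v : ℝ) = -1 := by exact_mod_cast hdv1
      set z : V → ℝ := fun x => β x - (if x = v then 1 else 0) with hzdef
      have hzv : z v = β v - 1 := by simp [hzdef]
      have hzc : ∀ u, z (c u) = β (c u) := by
        intro u; simp [hzdef, hcnev u]
      have hzsupp : ∀ x, x ∉ s → z x = 0 := by
        intro x hx
        have h1 : x ≠ v := fun h => hx (h ▸ hmemv)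
        simp [hzdef, h1, hβsupp x hx]
      have hind : ∀ i : V, ∑ j ∈ s, (A i j : ℝ) * (if j = v then (1:ℝ) else 0)
          = (A i v : ℝ) := by
        intro i
        rw [hexp (fun j => (A i j : ℝ) * (if j = v then (1:ℝ) else 0))]
        simp only [if_pos rfl, mul_one]
        have : ∑ u : ZMod k, (A i (c u) : ℝ) * (if c u = v then (1:ℝ) else 0) = 0 := by
          apply Finset.sum_eq_zero
          intro u _
          rw [if_neg (hcnev u), mul_zero]
        rw [this, add_zero]
        simp
      have hzrows : ∀ i ∈ s, ∑ j ∈ s, (A i j : ℝ) * z j = 0 := by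
        intro i hi
        have hsplitrow : ∑ j ∈ s, (A i j : ℝ) * z j
            = (∑ j ∈ s, (A i j : ℝ) * β j) - (A i v : ℝ) := by
          rw [← hind i, ← Finset.sum_sub_distrib]
          apply Finset.sum_congr rfl
          intro j _
          rw [hzdef]
          ring
        rw [hsplitrow, hrows i hi]
        rw [hsdef] at hi
        rcases Finset.mem_insert.mp hi with h | h
        · rw [h, hrv, hWr, hdvr]; ring
        · rw [hs0] at h
          simp only [Finset.mem_image, Finset.mem_univ, true_and] at h
          obtain ⟨u, hu⟩ := h
          rw [← hu, hrc u]; ring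
      have hz0 := quad_zero A hell s z hzsupp hzrows
      have hbt : β (c t₀) = 0 := by
        have : z (c t₀) = 0 := by rw [hz0]; rfl
        rw [hzc t₀] at this
        exact this
      have hstr := hedge (c t₀) (hmemc t₀) v hmemv hdv1 (hcnev t₀) hpos
      rw [hβmem (c t₀) (hmemc t₀)] at hbt
      linarith

end Cycle
/-- Corollary A.1.5, structural part: in an elliptic log canonical system `A` with
graph `Γ`: (i) off-diagonal entries are at most `2`; (ii) a double edge is an isolated
connected component; (iii) every vertex of weight `1` (i.e. `A i i = -1`) has at most
two neighbours; (iv) every cycle is an isolated connected component. -/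
theorem elliptic_logCanonical_structure {V : Type*} [Fintype V] [DecidableEq V]
    (A : Matrix V V ℤ) (hsys : IsSystem A) (hell : IsElliptic A)
    (hlc : IsLogCanonical A) :
    (∀ i j, i ≠ j → A i j ≤ 2) ∧
    (∀ i j, i ≠ j → A i j = 2 → ∀ k, k ≠ i → k ≠ j → A i k = 0 ∧ A j k = 0) ∧
    (∀ i, A i i = -1 → ((sysGraph A).neighborSet i).ncard ≤ 2) ∧
    (∀ k : ℕ, 3 ≤ k → ∀ c : ZMod k → V, Function.Injective c →
      (∀ t, (sysGraph A).Adj (c t) (c (t + 1))) →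
      ∀ t, ∀ v, (sysGraph A).Adj (c t) v → v = c (t - 1) ∨ v = c (t + 1)) := by
  classical
  obtain ⟨-, hsymm, hdiag, hoff, -⟩ := hsys
  have hsym : ∀ a b : V, A b a = A a b := fun a b => hsymm.apply a b
  -- adjacency unfolding
  have hadjE : ∀ a b : V, (sysGraph A).Adj a b → a ≠ b ∧ 0 < A a b := by
    intro a b h
    rw [sysGraph, SimpleGraph.fromRel_adj] at h
    refine ⟨h.1, ?_⟩
    rcases h.2 with h' | h'
    · exact h'
    · rw [← hsym a b]; exact h'
  refine ⟨?_, ?_, ?_, ?_⟩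
  · intro i j hij
    exact (pair_facts A hsym hdiag hell hlc hij).1
  · intro i j hij h2 k hki hkj
    constructor
    · exact triple_fact A hsym hdiag hoff hell hlc hij (Ne.symm hki) (Ne.symm hkj) h2
    · refine triple_fact A hsym hdiag hoff hell hlc hij.symm (Ne.symm hkj) (Ne.symm hki) ?_
      rw [hsym i j]; exact h2
  · intro i h1
    by_contra hcard
    push_neg at hcard
    obtain ⟨t, hts, htc⟩ := Set.exists_subset_card_eq (show 3 ≤ ((sysGraph A).neighborSet i).ncard from hcard)
    obtain ⟨j, k, l, hjk, hjl, hkl, rfl⟩ := Set.ncard_eq_three.mp htc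
    have hj := hadjE i j ((SimpleGraph.mem_neighborSet _ _ _).mp (hts (by simp)))
    have hk := hadjE i k ((SimpleGraph.mem_neighborSet _ _ _).mp (hts (by simp)))
    have hl := hadjE i l ((SimpleGraph.mem_neighborSet _ _ _).mp (hts (by simp)))
    exact star_fact A hsym hdiag hoff hell hlc h1 hj.1 hk.1 hl.1 hjk hjl hkl
      hj.2 hk.2 hl.2
  · intro k hk c hc hadjc t v hadj
    by_contra hcon
    push_neg at hcon
    obtain ⟨hv1, hv2⟩ := hcon
    have hE : ∀ u : ZMod k, 0 < A (c u) (c (u + 1)) := fun u => (hadjE _ _ (hadjc u)).2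
    have hpos : 0 < A (c t) v := (hadjE _ _ hadj).2
    have hne : c t ≠ v := (hadjE _ _ hadj).1
    by_cases hin : ∃ u, v = c u
    · obtain ⟨u, rfl⟩ := hin
      have e2 := (cycle_entries A hsym hdiag hoff hell hlc hk c hc hE).2.1
      have h0 := e2 t u (fun h => hne (congrArg c h).symm)
        (fun h => hv1 (congrArg c h)) (fun h => hv2 (congrArg c h))
      omega
    · push_neg at hin
      exact cycle_step A hsym hdiag hoff hell hlc hk c hc hE t v hin hpos
end

section
/- (Theorem A.1.6(a), first assertion) A connected parabolic log canonical system A of size n is minimal if and only if either A contains no element of the first kind (no index i with A i i = -1), or n = 2. -/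
open Matrix

section Helpers

private lemma indicator_split' {V : Type*} [DecidableEq V] {e i : V} (hei : e ≠ i) (ce ci : ℝ) (l : V) :
    (if l = e then ce else if l = i then ci else 0)
      = (if l = e then ce else 0) + (if l = i then ci else 0) := by
  by_cases h1 : l = e
  · subst h1; simp [hei]
  · simp [h1]

private lemma dot_two' {V : Type*} [Fintype V] [DecidableEq V] (M : Matrix V V ℝ) {e i : V}
    (hei : e ≠ i) (ce ci : ℝ) :
    (fun k => if k = e then ce else if k = i then ci else 0) ⬝ᵥ
      M.mulVec (fun k => if k = e then ce else if k = i then ci else 0)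
    = ce * (M e e * ce + M e i * ci) + ci * (M i e * ce + M i i * ci) := by
  simp only [dotProduct, mulVec, indicator_split' hei, mul_add, add_mul,
    Finset.sum_add_distrib, mul_ite, ite_mul, mul_zero, zero_mul,
    Finset.sum_ite_eq', Finset.mem_univ, if_true]
  ring

private lemma indicator_split3' {V : Type*} [DecidableEq V] {e i k : V} (hei : e ≠ i) (hek : e ≠ k)
    (hik : i ≠ k) (ce ci ck : ℝ) (l : V) :
    (if l = e then ce else if l = i then ci else if l = k then ck else 0)
      = (if l = e then ce else 0) + (if l = i then ci else 0) + (if l = k then ck else 0) := by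
  by_cases h1 : l = e
  · subst h1; simp [hei, hek]
  · by_cases h2 : l = i
    · subst h2; simp [h1, hik]
    · simp [h1, h2]

private lemma dot_three' {V : Type*} [Fintype V] [DecidableEq V] (M : Matrix V V ℝ) {e i k : V}
    (hei : e ≠ i) (hek : e ≠ k) (hik : i ≠ k) (ce ci ck : ℝ) :
    (fun l => if l = e then ce else if l = i then ci else if l = k then ck else 0) ⬝ᵥ
      M.mulVec (fun l => if l = e then ce else if l = i then ci else if l = k then ck else 0)
    = ce * (M e e * ce + M e i * ci + M e k * ck)
      + ci * (M i e * ce + M i i * ci + M i k * ck)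
      + ck * (M k e * ce + M k i * ci + M k k * ck) := by
  simp only [dotProduct, mulVec, indicator_split3' hei hek hik, mul_add, add_mul,
    Finset.sum_add_distrib, mul_ite, ite_mul, mul_zero, zero_mul,
    Finset.sum_ite_eq', Finset.mem_univ, if_true]
  ring

private lemma univ_pair' {V : Type*} [DecidableEq V] {e i : V} :
    (Finset.univ : Finset {x // x ∈ ({e, i} : Finset V)}) =
      {⟨e, by simp⟩, ⟨i, by simp⟩} := by
  ext ⟨v, hv⟩
  simp only [Finset.mem_univ, true_iff, Finset.mem_insert, Finset.mem_singleton] at hv ⊢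
  rcases hv with h | h
  · left; exact Subtype.ext h
  · right; exact Subtype.ext h

private lemma pair_ne' {V : Type*} [DecidableEq V] {e i : V} (hei : e ≠ i) :
    (⟨e, by simp⟩ : {x // x ∈ ({e, i} : Finset V)}) ≠ ⟨i, by simp⟩ := by
  simp [Subtype.ext_iff, hei]

private lemma dot_pair' {V : Type*} [DecidableEq V] {e i : V} (hei : e ≠ i)
    (M : Matrix {x // x ∈ ({e, i} : Finset V)} {x // x ∈ ({e, i} : Finset V)} ℝ)
    (x : {x // x ∈ ({e, i} : Finset V)} → ℝ) :
    x ⬝ᵥ M.mulVec x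
    = x ⟨e, by simp⟩ * (M ⟨e, by simp⟩ ⟨e, by simp⟩ * x ⟨e, by simp⟩
        + M ⟨e, by simp⟩ ⟨i, by simp⟩ * x ⟨i, by simp⟩)
      + x ⟨i, by simp⟩ * (M ⟨i, by simp⟩ ⟨e, by simp⟩ * x ⟨e, by simp⟩
        + M ⟨i, by simp⟩ ⟨i, by simp⟩ * x ⟨i, by simp⟩) := by
  simp only [dotProduct, mulVec, univ_pair', Finset.sum_pair (pair_ne' hei)]

private lemma first_step' {V} {G : SimpleGraph V} {u v : V} (w : G.Walk u v) (h : u ≠ v) :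
    ∃ z, G.Adj u z := by
  cases w with
  | nil => exact absurd rfl h
  | cons h' _ => exact ⟨_, h'⟩

end Helpers

/-- Theorem A.1.6(a), first assertion: a connected parabolic log canonical system of
size `n` is minimal if and only if it contains no element of the first kind, or `n = 2`. -/
theorem connParabolic_minimal_iff {n : ℕ}
    (A : Matrix (Fin n) (Fin n) ℤ) (hsys : IsSystem A) (hpar : IsConnParabolic A)
    (hlc : IsLogCanonical A) :
    IsMinimal A ↔ ((¬ ∃ i, A i i = -1) ∨ n = 2) := by
  obtain ⟨hne, hsymm, hdiag, hoff, -⟩ := hsys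
  have hsym : ∀ i j : Fin n, A j i = A i j := fun i j => hsymm.apply i j
  obtain ⟨hNSD, hnND, hconn⟩ := hpar
  constructor
  · -- minimal → no first kind or n = 2
    intro hmin
    by_contra hcont
    push_neg at hcont
    obtain ⟨hex, hn2⟩ := hcont
    obtain ⟨e, he⟩ := hex
    apply hmin
    refine ⟨e, he, ?_⟩
    intro i hie
    by_cases hb0 : A i e = 0
    · exact Or.inl hb0
    right
    have hn3 : 2 < n := by
      have h1 := e.isLt
      have h2 := i.isLt
      have h3 := Fin.val_ne_of_ne hie
      omega
    have hb1 : 1 ≤ A i e := by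
      have := hoff i e hie
      omega
    set b : ℤ := A i e with hbdef
    clear_value b
    have heb : A e i = b := hbdef ▸ hsym i e
    have hb1R : (1 : ℝ) ≤ (b : ℝ) := by exact_mod_cast hb1
    -- NSD test: b² + A i i ≤ 0
    have hq := hNSD (fun k => if k = e then (b : ℝ) else if k = i then 1 else 0)
    rw [dot_two' (matReal A) (Ne.symm hie) (b : ℝ) 1] at hq
    simp only [matReal, Matrix.map_apply, he, heb, ← hbdef] at hq
    push_cast at hq
    have hle : b * b + A i i ≤ 0 := by
      have : (b : ℝ) * b + (A i i : ℝ) ≤ 0 := by nlinarith [hq]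
      exact_mod_cast this
    rcases lt_or_eq_of_le hle with hlt | heq0
    · -- elliptic pair: use log canonical
      set s : Finset (Fin n) := {e, i} with hsdef
      have hes : e ∈ s := by simp [hsdef]
      have his : i ∈ s := by simp [hsdef]
      have hAiiR : (A i i : ℝ) ≤ -((b : ℝ) * b) - 1 := by
        have : A i i ≤ -(b * b) - 1 := by omega
        have h' : ((A i i : ℤ) : ℝ) ≤ ((-(b * b) - 1 : ℤ) : ℝ) := by exact_mod_cast this
        push_cast at h'
        linarith
      have hND : NegDefMat (matReal (subMat A s)) := by
        intro x hx
        rw [dot_pair' (Ne.symm hie) (matReal (subMat A s)) x]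
        have m1 : matReal (subMat A s) ⟨e, hes⟩ ⟨e, hes⟩ = (A e e : ℝ) := rfl
        have m2 : matReal (subMat A s) ⟨e, hes⟩ ⟨i, his⟩ = (A e i : ℝ) := rfl
        have m3 : matReal (subMat A s) ⟨i, his⟩ ⟨e, hes⟩ = (A i e : ℝ) := rfl
        have m4 : matReal (subMat A s) ⟨i, his⟩ ⟨i, his⟩ = (A i i : ℝ) := rfl
        rw [m1, m2, m3, m4, he, heb, ← hbdef]
        set u := x ⟨e, hes⟩ with hudef
        set v := x ⟨i, his⟩ with hvdef
        have huv : u ≠ 0 ∨ v ≠ 0 := by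
          by_contra hc
          push_neg at hc
          apply hx
          funext p
          obtain ⟨w, hw⟩ := p
          have hw' : w = e ∨ w = i := by simpa [hsdef] using hw
          rcases hw' with rfl | rfl
          · exact hc.1
          · exact hc.2
        clear_value u v
        push_cast
        rcases eq_or_ne v 0 with hv | hv
        · have hu : u ≠ 0 := by
            rcases huv with h | h
            · exact h
            · exact absurd hv h
          rw [hv]
          nlinarith [mul_self_pos.mpr hu]
        · nlinarith [sq_nonneg (u - (b : ℝ) * v), mul_self_pos.mpr hv, sq_nonneg v, hAiiR]
      have hpos : (0 : ℝ) < -(A i i : ℝ) - (b : ℝ) * b := by linarith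
      set αi : ℝ := ((b : ℝ) + 2 + (A i i : ℝ)) / (-(A i i : ℝ) - (b : ℝ) * b) with hαidef
      set αe : ℝ := 1 + (b : ℝ) * αi with hαedef
      set α : Fin n → ℝ := fun k => if k = e then αe else if k = i then αi else 0 with hαdef
      have hαe : α e = αe := by simp [hαdef]
      have hαi : α i = αi := by simp [hαdef, hie]
      have heqs : ∀ j ∈ s, ∑ l ∈ s, (A j l : ℝ) * α l = -(A j j : ℝ) - 2 := by
        intro j hj
        rw [hsdef, Finset.sum_pair (Ne.symm hie)]
        have hj' : j = e ∨ j = i := by simpa [hsdef] using hj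
        rcases hj' with h | h
        · rw [h, hαe, hαi, he, heb, hαedef]
          push_cast
          ring
        · rw [h, hαe, hαi, ← hbdef, hαedef, hαidef]
          have h0 : -(A i i : ℝ) - (b : ℝ) * b ≠ 0 := ne_of_gt hpos
          linear_combination (-((b : ℝ) + 2 + (A i i : ℝ))) * mul_inv_cancel₀ h0
      obtain ⟨-, h2⟩ := hlc s hND α heqs
      have hadj : ((sysGraph A).comap (Subtype.val : {x // x ∈ s} → Fin n)).Adj ⟨i, his⟩ ⟨e, hes⟩ := by
        show (sysGraph A).Adj i e
        rw [sysGraph, SimpleGraph.fromRel_adj]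
        exact ⟨hie, Or.inl (by omega)⟩
      have h3 := h2 ⟨i, his⟩ ⟨e, hes⟩ he hadj.reachable
      rw [show (⟨i, his⟩ : {x // x ∈ s}).val = i from rfl, hαi, hαidef] at h3
      clear_value α
      -- -1 < αi gives b² < b + 2 over ℝ
      have hb2 : (b : ℝ) * b < (b : ℝ) + 2 := by
        rw [lt_div_iff₀ hpos] at h3
        nlinarith [h3]
      have hb2' : b * b < b + 2 := by exact_mod_cast hb2
      have hbone : b = 1 := by nlinarith [hb1, hb2']
      rw [hbone] at hlt
      constructor
      · omega
      · exact hbone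
    · -- degenerate pair: contradiction with connectivity
      exfalso
      have hker : ∀ k : Fin n, k ≠ e → k ≠ i → A k e = 0 ∧ A k i = 0 := by
        intro k hke hki
        by_contra hc
        have hce : 0 ≤ A k e := hoff k e hke
        have hci : 0 ≤ A k i := hoff k i hki
        have hc1 : 1 ≤ b * A k e + A k i := by
          rcases (not_and_or.mp hc) with h | h
          · have h1 : 1 ≤ A k e := by omega
            nlinarith [hb1]
          · have h1 : 1 ≤ A k i := by omega
            nlinarith [hb1, mul_nonneg (by omega : (0:ℤ) ≤ b) hce]
        set c : ℝ := (b : ℝ) * (A k e : ℝ) + (A k i : ℝ) with hcdef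
        have hcR : 1 ≤ c := by
          rw [hcdef]
          exact_mod_cast hc1
        have hdR : (A k k : ℝ) ≤ -1 := by exact_mod_cast hdiag k
        have h0 : -(A k k : ℝ) ≠ 0 := by linarith
        set t : ℝ := c / (-(A k k : ℝ)) with htdef
        have htpos : 0 < t := by
          apply div_pos (by linarith) (by linarith)
        have htd : t * (A k k : ℝ) = -c := by
          rw [htdef, div_mul_eq_mul_div, div_eq_iff h0]
          ring
        clear_value c t
        have hq3 := hNSD (fun l => if l = e then (b : ℝ) else if l = i then 1 else if l = k then t else 0)
        rw [dot_three' (matReal A) (Ne.symm hie) (Ne.symm hke) (Ne.symm hki) (b : ℝ) 1 t] at hq3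
        simp only [matReal, Matrix.map_apply, he, heb, hsym k e, hsym k i, ← hbdef] at hq3
        have hiiR : (A i i : ℝ) = -((b : ℝ) * b) := by
          have h5 : A i i = -(b * b) := by omega
          rw [h5]
          push_cast
          ring
        rw [hiiR] at hq3
        push_cast at hq3
        have h5 : t * (t * (A k k : ℝ)) = t * (-c) := by rw [htd]
        have hfin : t * c ≤ 0 := by nlinarith [hq3, h5, hcdef]
        nlinarith [htpos, hcR, hfin]
      have hcl : ∀ u v : Fin n, (sysGraph A).Adj u v → (u = e ∨ u = i) → (v = e ∨ v = i) := by
        intro u v huv hu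
        by_contra hv
        push_neg at hv
        obtain ⟨h0e, h0i⟩ := hker v hv.1 hv.2
        rw [sysGraph, SimpleGraph.fromRel_adj] at huv
        obtain ⟨-, hp⟩ := huv
        have hvu : 0 < A v u := by
          rcases hp with h | h
          · rw [← hsym u v] at h
            exact h
          · exact h
        rcases hu with rfl | rfl
        · omega
        · omega
      have hall : ∀ (u v : Fin n) (w : (sysGraph A).Walk u v), (u = e ∨ u = i) → (v = e ∨ v = i) := by
        intro u v w
        induction w with
        | nil => exact id
        | cons h p ih => exact fun hu => ih (hcl _ _ h hu)
      obtain ⟨k, hke, hki⟩ : ∃ k : Fin n, k ≠ e ∧ k ≠ i := by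
        by_contra hc
        push_neg at hc
        have hsub : (Finset.univ : Finset (Fin n)) ⊆ {e, i} := by
          intro k _
          by_cases hk : k = e
          · simp [hk]
          · simp [hc k hk]
        have hcard := Finset.card_le_card hsub
        rw [Finset.card_univ, Fintype.card_fin, Finset.card_insert_of_notMem (by simp [Ne.symm hie]),
          Finset.card_singleton] at hcard
        omega
      obtain ⟨w⟩ := hconn.preconnected e k
      rcases hall e k w (Or.inl rfl) with h | h
      · exact hke h
      · exact hki h
  · -- no first kind or n = 2 → minimal
    rintro h ⟨e, he, hcon⟩
    rcases h with h | hn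
    · exact h ⟨e, he⟩
    · subst hn
      have h1 := e.isLt
      set i : Fin 2 := ⟨1 - e.val, by omega⟩ with hidef
      have hie : i ≠ e := by
        intro h
        have h2 := congrArg Fin.val h
        simp [hidef] at h2
        omega
      have hk2 : ∀ k : Fin 2, k = e ∨ k = i := by
        intro k
        have h2 := k.isLt
        have h3 : i.val = 1 - e.val := rfl
        by_cases hk : k.val = e.val
        · exact Or.inl (Fin.ext hk)
        · exact Or.inr (Fin.ext (by omega))
      clear_value i
      -- adjacency e i
      obtain ⟨w⟩ := hconn.preconnected e i
      obtain ⟨z, hz⟩ := first_step' w (Ne.symm hie)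
      have hze : z ≠ e := hz.ne'
      have hzi : z = i := by
        rcases hk2 z with h | h
        · exact absurd h hze
        · exact h
      rw [hzi] at hz
      rw [sysGraph, SimpleGraph.fromRel_adj] at hz
      obtain ⟨-, hp⟩ := hz
      have hpos : 0 < A i e := by
        rcases hp with h | h
        · rw [hsym i e] at h
          exact h
        · exact h
      rcases hcon i hie with h0 | ⟨hAii, hAie⟩
      · omega
      -- now build negative definiteness, contradiction
      apply hnND
      intro x hx
      set u := x e with hudef
      set v := x i with hvdef
      have hxind : x = fun k => if k = e then u else if k = i then v else 0 := by
        funext k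
        rcases hk2 k with h | h
        · subst h; simp [hudef]
        · subst h; simp [hie, hvdef]
      have huv : u ≠ 0 ∨ v ≠ 0 := by
        by_contra hc
        push_neg at hc
        apply hx
        funext k
        rcases hk2 k with h | h
        · subst h; exact hc.1
        · subst h; exact hc.2
      rw [hxind, dot_two' (matReal A) (Ne.symm hie) u v]
      simp only [matReal, Matrix.map_apply, he, hsym i e, hAie]
      have hAiiR : (A i i : ℝ) ≤ -2 := by exact_mod_cast hAii
      clear_value u v
      push_cast
      rcases eq_or_ne v 0 with hv | hv
      · have hu : u ≠ 0 := by
          rcases huv with h | h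
          · exact h
          · exact absurd hv h
        rw [hv]
        nlinarith [mul_self_pos.mpr hu]
      · nlinarith [sq_nonneg (u - v), mul_self_pos.mpr hv, sq_nonneg v, hAiiR]
end

section
/- (Part of Theorem A.1.8(a)) Let A be a minimal Lanner log canonical system of size n ≥ 4. Then A contains no element of the first kind, i.e. there is no index i with A i i = -1. -/
open Matrix

namespace LMNFK
variable {n : ℕ}

lemma sum_restrict {s : Finset (Fin n)} (x : {v // v ∈ s} → ℝ) (f : Fin n → ℝ) :
    ∑ q : Fin n, f q * (if h : q ∈ s then x ⟨q, h⟩ else 0)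
      = ∑ q : {v // v ∈ s}, f q.val * x q := by
  rw [← Finset.sum_subset (Finset.subset_univ s) (by intro q _ hq; simp [dif_neg hq]),
    ← Finset.sum_coe_sort s (fun q => f q * (if h : q ∈ s then x ⟨q, h⟩ else 0))]
  exact Finset.sum_congr rfl fun q _ => by simp [q.2]

lemma sub_quad (A : Matrix (Fin n) (Fin n) ℤ) (s : Finset (Fin n)) (x : {v // v ∈ s} → ℝ) :
    x ⬝ᵥ (matReal (subMat A s)).mulVec x
      = (fun p => if h : p ∈ s then x ⟨p, h⟩ else 0) ⬝ᵥ
          (matReal A).mulVec (fun p => if h : p ∈ s then x ⟨p, h⟩ else 0) := by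
  have e1 : x ⬝ᵥ (matReal (subMat A s)).mulVec x
      = ∑ p : {v // v ∈ s}, (∑ q : {v // v ∈ s}, (A p.val q.val : ℝ) * x q) * x p := by
    simp [dotProduct, Matrix.mulVec, matReal, subMat, Matrix.map_apply,
      Matrix.submatrix_apply, mul_comm]
  have e2 : (fun p => if h : p ∈ s then x ⟨p, h⟩ else 0) ⬝ᵥ
        (matReal A).mulVec (fun p => if h : p ∈ s then x ⟨p, h⟩ else 0)
      = ∑ p : Fin n, (∑ q : Fin n, (A p q : ℝ) * (if h : q ∈ s then x ⟨q, h⟩ else 0))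
          * (if h : p ∈ s then x ⟨p, h⟩ else 0) := by
    simp [dotProduct, Matrix.mulVec, matReal, Matrix.map_apply, mul_comm]
  rw [e1, e2]
  rw [sum_restrict x (fun p => ∑ q : Fin n, (A p q : ℝ) * (if h : q ∈ s then x ⟨q, h⟩ else 0))]
  refine Finset.sum_congr rfl fun p _ => ?_
  rw [sum_restrict x (fun q => (A p.val q : ℝ))]

lemma supported_le (A : Matrix (Fin n) (Fin n) ℤ) (hlan : IsLanner A)
    (s : Finset (Fin n)) (hs : s ≠ Finset.univ)
    (w : Fin n → ℝ) (hw : ∀ p, p ∉ s → w p = 0) : w ⬝ᵥ (matReal A).mulVec w ≤ 0 := by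
  have h := hlan.2 s hs (fun p => w p.val)
  rw [sub_quad] at h
  have hext : (fun p => if h : p ∈ s then w (⟨p, h⟩ : {v // v ∈ s}).val else 0) = w := by
    funext p
    by_cases hp : p ∈ s
    · simp [hp]
    · simp [hp, hw p hp]
  rwa [hext] at h

lemma quad_two (A : Matrix (Fin n) (Fin n) ℤ) (e i : Fin n) (c d : ℝ) :
    (c • (Pi.single e 1 : Fin n → ℝ) + d • (Pi.single i 1 : Fin n → ℝ)) ⬝ᵥ
      (matReal A).mulVec (c • (Pi.single e 1 : Fin n → ℝ) + d • (Pi.single i 1 : Fin n → ℝ)) =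
    c*c*(A e e : ℝ) + c*d*(A e i : ℝ) + d*c*(A i e : ℝ) + d*d*(A i i : ℝ) := by
  simp [matReal, Matrix.mulVec_add, Matrix.mulVec_smul, dotProduct_add, add_dotProduct,
    smul_dotProduct, dotProduct_smul, Matrix.mulVec_single, dotProduct_single,
    single_dotProduct, Matrix.map_apply]
  ring

lemma quad_three (A : Matrix (Fin n) (Fin n) ℤ) (e i j : Fin n) (c d f : ℝ) :
    (c • (Pi.single e 1 : Fin n → ℝ) + d • (Pi.single i 1 : Fin n → ℝ)
        + f • (Pi.single j 1 : Fin n → ℝ)) ⬝ᵥ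
      (matReal A).mulVec (c • (Pi.single e 1 : Fin n → ℝ) + d • (Pi.single i 1 : Fin n → ℝ)
        + f • (Pi.single j 1 : Fin n → ℝ)) =
    c*(c*(A e e : ℝ) + d*(A e i : ℝ)) + d*(c*(A i e : ℝ) + d*(A i i : ℝ))
      + c*f*(A e j : ℝ) + d*f*(A i j : ℝ) + f*c*(A j e : ℝ) + f*d*(A j i : ℝ)
      + f*f*(A j j : ℝ) := by
  simp [matReal, Matrix.mulVec_add, Matrix.mulVec_smul, dotProduct_add, add_dotProduct,
    smul_dotProduct, dotProduct_smul, Matrix.mulVec_single, dotProduct_single,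
    single_dotProduct, Matrix.map_apply]
  ring

lemma ne_univ_of_card_lt (s : Finset (Fin n)) (h : s.card < n) : s ≠ Finset.univ := by
  intro h'
  rw [h', Finset.card_univ, Fintype.card_fin] at h
  omega

lemma parabolic_contra (hn : 4 ≤ n) (A : Matrix (Fin n) (Fin n) ℤ)
    (hsymm : ∀ p q, A p q = A q p) (hdiag : ∀ p, A p p ≤ -1)
    (hoff : ∀ p q, p ≠ q → 0 ≤ A p q)
    (hlan : IsLanner A) (e i : Fin n) (hie : i ≠ e) (c d : ℤ) (hc : 0 < c) (hd : 0 < d)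
    (h1 : A e e * c + A e i * d = 0) (h2 : A i e * c + A i i * d = 0) : False := by
  by_cases hex : ∃ j, j ≠ e ∧ j ≠ i ∧ 0 < A j e * c + A j i * d
  · obtain ⟨j, hje, hji, hC⟩ := hex
    have ht : ({e, i, j} : Finset (Fin n)) ≠ Finset.univ := by
      apply ne_univ_of_card_lt
      calc ({e, i, j} : Finset (Fin n)).card ≤ ({i, j} : Finset (Fin n)).card + 1 :=
            Finset.card_insert_le _ _
        _ ≤ (({j} : Finset (Fin n)).card + 1) + 1 := by
            exact Nat.add_le_add_right (Finset.card_insert_le _ _) 1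
        _ = 3 := by simp
        _ < n := by omega
    set γ : ℝ := -(A j j : ℝ) with hγdef
    have hγpos : 0 < γ := by
      have := hdiag j
      rw [hγdef]
      have : (A j j : ℝ) ≤ -1 := by exact_mod_cast this
      linarith
    set C : ℝ := (A j e : ℝ) * c + (A j i : ℝ) * d with hCdef
    have hCpos : 0 < C := by
      rw [hCdef]
      have : (0 : ℝ) < ((A j e * c + A j i * d : ℤ) : ℝ) := by exact_mod_cast hC
      push_cast at this
      linarith
    have h1R : (A e e : ℝ) * c + (A e i : ℝ) * d = 0 := by exact_mod_cast h1
    have h2R : (A i e : ℝ) * c + (A i i : ℝ) * d = 0 := by exact_mod_cast h2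
    have hsEJ : (A e j : ℝ) = (A j e : ℝ) := by exact_mod_cast hsymm e j
    have hsIJ : (A i j : ℝ) = (A j i : ℝ) := by exact_mod_cast hsymm i j
    have hsupp : ∀ p, p ∉ ({e, i, j} : Finset (Fin n)) →
        (((c : ℝ) * γ) • (Pi.single e 1 : Fin n → ℝ) + ((d : ℝ) * γ) • (Pi.single i 1 : Fin n → ℝ)
          + C • (Pi.single j 1 : Fin n → ℝ)) p = 0 := by
      intro p hp
      simp only [Finset.mem_insert, Finset.mem_singleton, not_or] at hp
      obtain ⟨hpe, hpi, hpj⟩ := hp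
      simp [Pi.single_eq_of_ne hpe, Pi.single_eq_of_ne hpi, Pi.single_eq_of_ne hpj]
    have hq := supported_le A hlan _ ht _ hsupp
    rw [quad_three] at hq
    have hEq : ((c : ℝ)*γ)*(((c : ℝ)*γ)*(A e e : ℝ) + ((d : ℝ)*γ)*(A e i : ℝ))
        + ((d : ℝ)*γ)*(((c : ℝ)*γ)*(A i e : ℝ) + ((d : ℝ)*γ)*(A i i : ℝ))
        + ((c : ℝ)*γ)*C*(A e j : ℝ) + ((d : ℝ)*γ)*C*(A i j : ℝ)
        + C*((c : ℝ)*γ)*(A j e : ℝ) + C*((d : ℝ)*γ)*(A j i : ℝ)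
        + C*C*(A j j : ℝ) = γ * (C * C) := by
      rw [hsEJ, hsIJ, hCdef, hγdef]
      linear_combination (γ*γ*(c : ℝ)) * h1R + (γ*γ*(d : ℝ)) * h2R
    rw [hEq] at hq
    exact absurd hq (not_le.mpr (mul_pos hγpos (mul_pos hCpos hCpos)))
  · push_neg at hex
    have hzero : ∀ j, j ≠ e → j ≠ i → A j e = 0 ∧ A j i = 0 := by
      intro j hje hji
      have ho1 := hoff j e hje
      have ho2 := hoff j i hji
      have hle := hex j hje hji
      have hnn1 : 0 ≤ A j e * c := mul_nonneg ho1 hc.le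
      have hnn2 : 0 ≤ A j i * d := mul_nonneg ho2 hd.le
      have he0 : A j e * c = 0 := by linarith
      have hi0 : A j i * d = 0 := by linarith
      constructor
      · rcases mul_eq_zero.mp he0 with h | h
        · exact h
        · omega
      · rcases mul_eq_zero.mp hi0 with h | h
        · exact h
        · omega
    have hhyp := hlan.1
    unfold _root_.IsHyperbolic NegSemidefMat at hhyp
    push_neg at hhyp
    obtain ⟨x, hx⟩ := hhyp
    set s0 : Finset (Fin n) := {e, i} with hs0def
    set x1 : Fin n → ℝ := fun p => if p ∈ s0 then x p else 0 with hx1def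
    set x2 : Fin n → ℝ := fun p => if p ∈ s0 then 0 else x p with hx2def
    have hx12 : x = x1 + x2 := by
      funext p
      by_cases hp : p ∈ s0 <;> simp [hx1def, hx2def, hp]
    have hs0ne : s0 ≠ Finset.univ := by
      apply ne_univ_of_card_lt
      calc s0.card ≤ ({i} : Finset (Fin n)).card + 1 := Finset.card_insert_le _ _
        _ = 2 := by simp
        _ < n := by omega
    have hs0cne : s0ᶜ ≠ Finset.univ := by
      intro h
      have : e ∈ s0ᶜ := h ▸ Finset.mem_univ e
      rw [Finset.mem_compl] at this
      exact this (Finset.mem_insert_self e {i})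
    have q1 : x1 ⬝ᵥ (matReal A).mulVec x1 ≤ 0 := by
      apply supported_le A hlan s0 hs0ne
      intro p hp
      simp [hx1def, hp]
    have q2 : x2 ⬝ᵥ (matReal A).mulVec x2 ≤ 0 := by
      apply supported_le A hlan s0ᶜ hs0cne
      intro p hp
      rw [Finset.notMem_compl] at hp
      simp [hx2def, hp]
    have hA0 : ∀ p q : Fin n, p ∈ s0 → q ∉ s0 → (A p q : ℝ) = 0 := by
      intro p q hp hq
      simp only [hs0def, Finset.mem_insert, Finset.mem_singleton, not_or] at hp hq
      have h0 := hzero q hq.1 hq.2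
      rcases hp with rfl | rfl
      · rw [hsymm p q]  -- p = e here; careful naming
        exact_mod_cast h0.1
      · rw [hsymm _ q]
        exact_mod_cast h0.2
    have cross1 : x1 ⬝ᵥ (matReal A).mulVec x2 = 0 := by
      have hterm : ∀ p, x1 p * (∑ q, (A p q : ℝ) * x2 q) = 0 := by
        intro p
        by_cases hp : p ∈ s0
        · rw [Finset.mul_sum]
          refine Finset.sum_eq_zero fun q _ => ?_
          by_cases hq : q ∈ s0
          · simp [hx2def, hq]
          · rw [hA0 p q hp hq]; ring
        · simp [hx1def, hp]
      simp only [dotProduct, Matrix.mulVec, matReal, Matrix.map_apply]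
      exact Finset.sum_eq_zero fun p _ => hterm p
    have cross2 : x2 ⬝ᵥ (matReal A).mulVec x1 = 0 := by
      have hterm : ∀ p, x2 p * (∑ q, (A p q : ℝ) * x1 q) = 0 := by
        intro p
        by_cases hp : p ∈ s0
        · simp [hx2def, hp]
        · rw [Finset.mul_sum]
          refine Finset.sum_eq_zero fun q _ => ?_
          by_cases hq : q ∈ s0
          · have : (A p q : ℝ) = 0 := by
              rw [show (A p q : ℝ) = (A q p : ℝ) by exact_mod_cast hsymm p q]
              exact hA0 q p hq hp
            rw [this]; ring
          · simp [hx1def, hq]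
      simp only [dotProduct, Matrix.mulVec, matReal, Matrix.map_apply]
      exact Finset.sum_eq_zero fun p _ => hterm p
    rw [hx12, Matrix.mulVec_add, dotProduct_add, add_dotProduct, add_dotProduct] at hx
    rw [cross1, cross2] at hx
    linarith

end LMNFK


/-- Part of Theorem A.1.8(a) -/
theorem lanner_minimal_no_first_kind {n : ℕ} (hn : 4 ≤ n)
    (A : Matrix (Fin n) (Fin n) ℤ) (hsys : IsSystem A) (hlan : IsLanner A)
    (hlc : IsLogCanonical A) (hmin : IsMinimal A) :
    ¬ ∃ i, A i i = -1 := by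
  rintro ⟨e, he⟩
  obtain ⟨-, hsymm', hdiag, hoff, -⟩ := hsys
  have hsymm : ∀ p q : Fin n, A p q = A q p := fun p q => hsymm'.apply q p
  have hnc : ¬ Contractible A e := fun hc => hmin ⟨e, he, hc⟩
  unfold Contractible at hnc
  push_neg at hnc
  obtain ⟨i, hie, hA1, hA2⟩ := hnc
  have ha1 : 1 ≤ A i e := by
    have := hoff i e hie
    omega
  have aei : A e i = A i e := hsymm e i
  have hei : e ≠ i := fun h => hie h.symm
  set s : Finset (Fin n) := {e, i} with hsdef
  have hme : e ∈ s := Finset.mem_insert_self e {i}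
  have hmi : i ∈ s := Finset.mem_insert_of_mem (Finset.mem_singleton_self i)
  have hsne : s ≠ Finset.univ := by
    apply LMNFK.ne_univ_of_card_lt
    calc s.card ≤ ({i} : Finset (Fin n)).card + 1 := Finset.card_insert_le _ _
      _ = 2 := by simp
      _ < n := by omega
  -- the general two-point quadratic inequality from the Lanner condition
  have two_le : ∀ c d : ℝ,
      c*c*(A e e : ℝ) + c*d*(A e i : ℝ) + d*c*(A i e : ℝ) + d*d*(A i i : ℝ) ≤ 0 := by
    intro c d
    have hsupp : ∀ p, p ∉ s →
        (c • (Pi.single e 1 : Fin n → ℝ) + d • (Pi.single i 1 : Fin n → ℝ)) p = 0 := by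
      intro p hp
      simp only [hsdef, Finset.mem_insert, Finset.mem_singleton, not_or] at hp
      simp [Pi.single_eq_of_ne hp.1, Pi.single_eq_of_ne hp.2]
    have h := LMNFK.supported_le A hlan s hsne _ hsupp
    rwa [LMNFK.quad_two] at h
  have K1 : 2 * A i e + A i i ≤ 1 := by
    have h := two_le 1 1
    rw [he, aei] at h
    push_cast at h
    have h2 : ((2 * A i e + A i i : ℤ) : ℝ) ≤ ((1 : ℤ) : ℝ) := by push_cast; linarith
    exact_mod_cast h2
  have K2 : A i e * A i e + A i i ≤ 0 := by
    have h := two_le (A i e : ℝ) 1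
    rw [he, aei] at h
    push_cast at h
    have h2 : ((A i e * A i e + A i i : ℤ) : ℝ) ≤ ((0 : ℤ) : ℝ) := by push_cast; nlinarith
    exact_mod_cast h2
  by_cases hb2 : A i i ≤ -2
  · -- second kind neighbour: a ≥ 2
    have ha2 : 2 ≤ A i e := by
      have := hA2 hb2
      omega
    by_cases hpar : A i i = -(A i e * A i e)
    · -- parabolic two-point subsystem
      exact LMNFK.parabolic_contra hn A hsymm hdiag hoff hlan e i hie (A i e) 1
        (by omega) one_pos
        (by rw [he, aei]; ring)
        (by rw [hpar]; ring)
    · -- negative definite two-point subsystem: contradicts log canonicity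
      have hb : A i i ≤ -(A i e * A i e) - 1 := by omega
      have hDz : (A i e : ℝ) * (A i e : ℝ) + (A i i : ℝ) ≤ -1 := by
        have h2 : ((A i e * A i e + A i i : ℤ) : ℝ) ≤ ((-1 : ℤ) : ℝ) := by
          exact_mod_cast (by omega : A i e * A i e + A i i ≤ -1)
        push_cast at h2
        linarith
      have hDneg : (A i e : ℝ) * (A i e : ℝ) + (A i i : ℝ) < 0 := by linarith
      have hnd : NegDefMat (matReal (subMat A s)) := by
        intro x hx
        rw [LMNFK.sub_quad]
        have hx' : (fun p => if h : p ∈ s then x ⟨p, h⟩ else 0)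
            = (x ⟨e, hme⟩) • (Pi.single e 1 : Fin n → ℝ)
              + (x ⟨i, hmi⟩) • (Pi.single i 1 : Fin n → ℝ) := by
          funext p
          by_cases hpe : p = e
          · rw [hpe]
            simp [hme, Pi.single_eq_same, Pi.single_eq_of_ne hei]
          · by_cases hpi : p = i
            · rw [hpi]
              simp [hmi, Pi.single_eq_same, Pi.single_eq_of_ne hie]
            · have hp : p ∉ s := by
                simp [hsdef, Finset.mem_insert, Finset.mem_singleton, hpe, hpi]
              simp [hp, Pi.single_eq_of_ne hpe, Pi.single_eq_of_ne hpi]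
        rw [hx', LMNFK.quad_two, he, aei]
        set c : ℝ := x ⟨e, hme⟩ with hcdef
        set d : ℝ := x ⟨i, hmi⟩ with hddef
        have hcd : c ≠ 0 ∨ d ≠ 0 := by
          by_contra hcon
          push_neg at hcon
          apply hx
          funext q
          obtain ⟨p, hp⟩ := q
          rcases Finset.mem_insert.mp hp with h1 | h1
          · rw [show (⟨p, hp⟩ : {v // v ∈ s}) = ⟨e, hme⟩ from Subtype.ext h1]
            exact hcon.1
          · rw [show (⟨p, hp⟩ : {v // v ∈ s}) = ⟨i, hmi⟩ from
              Subtype.ext (Finset.mem_singleton.mp h1)]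
            exact hcon.2
        push_cast
        by_cases hd0 : d = 0
        · have hc0 : c ≠ 0 := by
            rcases hcd with h | h
            · exact h
            · exact absurd hd0 h
          rw [hd0]
          nlinarith [mul_self_pos.mpr hc0]
        · nlinarith [sq_nonneg (c - (A i e : ℝ) * d), mul_self_pos.mpr hd0,
            mul_le_mul_of_nonneg_right hDz (mul_self_nonneg d)]
      -- the canonical coefficients
      set aR : ℝ := (A i e : ℝ) with haRdef
      set bR : ℝ := (A i i : ℝ) with hbRdef
      have hDlt : aR * aR + bR < 0 := hDneg
      have hDne : aR * aR + bR ≠ 0 := ne_of_lt hDlt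
      set αi : ℝ := (-bR - aR - 2) / (aR * aR + bR) with hαidef
      set αe : ℝ := aR * αi + 1 with hαedef
      set α : Fin n → ℝ := fun p => if p = e then αe else if p = i then αi else 0 with hαdef
      have hkey : (aR * aR + bR) * αi = -bR - aR - 2 := by
        rw [hαidef]
        rw [mul_comm]; exact div_mul_cancel₀ _ hDne
      have hsum : ∀ p ∈ s, ∑ q ∈ s, (A p q : ℝ) * α q = -(A p p : ℝ) - 2 := by
        intro p hp
        have hαe : α e = αe := by simp [hαdef]
        have hαi2 : α i = αi := by simp [hαdef, hie]
        have hsum' : ∑ q ∈ s, (A p q : ℝ) * α q = (A p e : ℝ) * αe + (A p i : ℝ) * αi := by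
          rw [hsdef, Finset.sum_insert (by simp [hei]), Finset.sum_singleton, hαe, hαi2]
        rw [hsum']
        rcases Finset.mem_insert.mp hp with h1 | h1
        · rw [h1, he, aei, hαedef]
          push_cast
          ring
        · rw [Finset.mem_singleton.mp h1, hαedef]
          have hstep : (A i e : ℝ) * (aR * αi + 1) + (A i i : ℝ) * αi
              = (aR * aR + bR) * αi + aR := by
            rw [haRdef, hbRdef]; ring
          rw [hstep, hkey, hbRdef]
          ring
      obtain ⟨-, hstrict⟩ := hlc s hnd α hsum
      have hadj : (sysGraph A).Adj i e := by
        rw [sysGraph, SimpleGraph.fromRel_adj]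
        exact ⟨hie, Or.inl (by omega : (0:ℤ) < A i e)⟩
      have hreach : ((sysGraph A).comap (Subtype.val : {x // x ∈ s} → Fin n)).Reachable
          ⟨i, hmi⟩ ⟨e, hme⟩ :=
        SimpleGraph.Adj.reachable hadj
      have hlt := hstrict ⟨i, hmi⟩ ⟨e, hme⟩ he hreach
      have hαi3 : α i = αi := by simp [hαdef, hie]
      rw [hαi3, hαidef, lt_div_iff_of_neg hDlt] at hlt
      -- hlt : -bR - aR - 2 < -1 * (aR * aR + bR)
      have ha2R : (2 : ℝ) ≤ aR := by rw [haRdef]; exact_mod_cast ha2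
      nlinarith
  · -- first kind neighbour: a = 1, A i i = -1
    have hbi : A i i = -1 := by
      have := hdiag i
      omega
    have ha : A i e = 1 := by omega
    exact LMNFK.parabolic_contra hn A hsymm hdiag hoff hlan e i hie 1 1 one_pos one_pos
      (by rw [he, aei, ha]; ring)
      (by rw [ha, hbi]; ring)
end

section
/- Let A be an n × n real symmetric negative definite matrix with A i i < 0 for all i and A i j ≥ 0 for all i ≠ j. Then every entry of A⁻¹ is nonpositive: (A⁻¹) i j ≤ 0 for all i, j. -/
open Matrix

/-- If `A` is a real symmetric negative definite matrix (`xᵀAx < 0` for every nonzero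
`x`) with negative diagonal entries and nonnegative off-diagonal entries, then every
entry of `A⁻¹` is nonpositive. -/
theorem inv_entries_nonpos_of_negDef {n : Type*} [Fintype n] [DecidableEq n]
    (A : Matrix n n ℝ) (hsymm : A.IsSymm)
    (hneg : ∀ x : n → ℝ, x ≠ 0 → x ⬝ᵥ A.mulVec x < 0)
    (hdiag : ∀ i, A i i < 0) (hoff : ∀ i j, i ≠ j → 0 ≤ A i j) :
    ∀ i j, A⁻¹ i j ≤ 0 := by
  intro i j
  have hdet : IsUnit A.det := by
    rw [isUnit_iff_ne_zero]
    intro h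
    obtain ⟨v, hv, hAv⟩ := (Matrix.exists_mulVec_eq_zero_iff).2 h
    have := hneg v hv
    rw [hAv] at this
    simp at this
  set x : n → ℝ := fun k => A⁻¹ k j with hxdef
  set p : n → ℝ := fun k => max (x k) 0 with hpdef
  set m : n → ℝ := fun k => max (-x k) 0 with hmdef
  have hp : ∀ k, 0 ≤ p k := fun k => le_max_right _ _
  have hm : ∀ k, 0 ≤ m k := fun k => le_max_right _ _
  have hxpm : ∀ k, x k = p k - m k := by
    intro k
    rcases le_total (x k) 0 with h | h
    · simp [hpdef, hmdef, max_eq_right h, max_eq_left (neg_nonneg.2 h)]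
    · simp [hpdef, hmdef, max_eq_left h, max_eq_right (neg_nonpos.2 h)]
  have hpm0 : ∀ k, p k * m k = 0 := by
    intro k
    rcases le_total (x k) 0 with h | h
    · simp [hpdef, max_eq_right h]
    · simp [hmdef, max_eq_right (neg_nonpos.2 h)]
  have hmul : A.mulVec x = fun k => (1 : Matrix n n ℝ) k j := by
    funext k
    have h1 : A * A⁻¹ = 1 := Matrix.mul_nonsing_inv A hdet
    calc A.mulVec x k = (A * A⁻¹) k j := by
          simp [Matrix.mulVec, Matrix.mul_apply, dotProduct, hxdef]
      _ = (1 : Matrix n n ℝ) k j := by rw [h1]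
  have hdot : p ⬝ᵥ A.mulVec x = p j := by
    rw [hmul]
    simp [dotProduct, Matrix.one_apply]
  have hxeq : x = p - m := funext fun k => by simpa using hxpm k
  have hsplit : p ⬝ᵥ A.mulVec x = p ⬝ᵥ A.mulVec p - p ⬝ᵥ A.mulVec m := by
    rw [hxeq, Matrix.mulVec_sub, dotProduct_sub]
  have hpAm : 0 ≤ p ⬝ᵥ A.mulVec m := by
    unfold dotProduct Matrix.mulVec
    simp only [dotProduct]
    apply Finset.sum_nonneg
    intro k _
    rw [Finset.mul_sum]
    apply Finset.sum_nonneg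
    intro l _
    rcases eq_or_ne k l with rfl | hkl
    · have h0 := hpm0 k
      have : p k * (A k k * m k) = A k k * (p k * m k) := by ring
      rw [this, h0, mul_zero]
    · have := hoff k l hkl
      positivity
  have hpz : p = 0 := by
    by_contra hp0
    have h1 := hneg p hp0
    have h2 := hp j
    rw [hsplit] at hdot
    linarith
  have h1 := hxpm i
  rw [hpz] at h1
  simp only [Pi.zero_apply, zero_sub] at h1
  have h2 : A⁻¹ i j = -m i := h1
  linarith [hm i]
end

section
/- Let A be an n × n real symmetric negative definite matrix with A i i < 0 for all i and A i j ≥ 0 for all i ≠ j. Let Γ be the simple graph on the index set with an edge between i ≠ j iff A i j > 0. Then for all indices i, j: (A⁻¹) i j ≠ 0 if and only if i and j lie in the same connected component of Γ (in particular all diagonal entries of A⁻¹ are nonzero). Equivalently, after simultaneously permuting rows and columns according to the connected components of Γ, A⁻¹ becomes block diagonal with all entries in each diagonal block nonzero. -/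
open Matrix

/-- If `A` is a real symmetric negative definite matrix (`xᵀAx < 0` for every nonzero
`x`) with negative diagonal entries and nonnegative off-diagonal entries, and `Γ` is the
simple graph with an edge between `i ≠ j` iff `A i j > 0`, then `(A⁻¹) i j ≠ 0` if and
only if `i` and `j` lie in the same connected component of `Γ`; i.e. `A⁻¹` is block
diagonal along the connected components of `Γ`, with all entries in each block nonzero. -/
theorem inv_entry_ne_zero_iff_reachable {n : Type*} [Fintype n] [DecidableEq n]
    (A : Matrix n n ℝ) (hsymm : A.IsSymm)
    (hneg : ∀ x : n → ℝ, x ≠ 0 → x ⬝ᵥ A.mulVec x < 0)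
    (hdiag : ∀ i, A i i < 0) (hoff : ∀ i j, i ≠ j → 0 ≤ A i j) :
    ∀ i j, A⁻¹ i j ≠ 0 ↔
      (SimpleGraph.fromRel fun i j => 0 < A i j).Reachable i j := by
  classical
  set Γ := SimpleGraph.fromRel fun i j => 0 < A i j with hΓ
  have hsA : ∀ i j, A j i = A i j := fun i j => hsymm.apply i j
  have hdet : A.det ≠ 0 := by
    intro h
    obtain ⟨v, hv, hv0⟩ := (Matrix.exists_mulVec_eq_zero_iff).2 h
    have := hneg v hv
    rw [hv0] at this
    simp at this
  have hu : IsUnit A.det := isUnit_iff_ne_zero.2 hdet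
  set C := A⁻¹ with hC
  have hAC : A * C = 1 := Matrix.mul_nonsing_inv A hu
  have hCA : C * A = 1 := Matrix.nonsing_inv_mul A hu
  have hCsymm : ∀ i j, C i j = C j i := by
    intro i j
    have h1 : Cᵀ = C := by
      rw [hC, Matrix.transpose_nonsing_inv, hsymm.eq]
    exact (congrFun (congrFun h1 j) i)
  -- mulVec of a column of C
  have hcol : ∀ j, A.mulVec (fun k => C k j) = fun k => (1 : Matrix n n ℝ) k j := by
    intro j
    funext k
    rw [← hAC, Matrix.mul_apply]
    rfl
  -- entrywise nonpositivity of C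
  have hCle : ∀ i j, C i j ≤ 0 := by
    intro i j
    by_contra hpos
    push_neg at hpos
    set x : n → ℝ := fun k => C k j with hx
    set p : n → ℝ := fun k => max (x k) 0 with hp
    set m : n → ℝ := fun k => max (-x k) 0 with hm
    have hp0 : ∀ k, 0 ≤ p k := fun k => le_max_right _ _
    have hm0 : ∀ k, 0 ≤ m k := fun k => le_max_right _ _
    have hpm : ∀ k, p k * m k = 0 := by
      intro k
      rcases le_total (x k) 0 with h | h
      · simp [hp, hm, max_eq_right h]
      · simp [hp, hm, max_eq_right (neg_nonpos.mpr h)]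
    have hxpm : ∀ k, x k = p k - m k := by
      intro k
      rcases le_total (x k) 0 with h | h
      · simp [hp, hm, max_eq_right h, max_eq_left (neg_nonneg.mpr h)]
      · simp [hp, hm, max_eq_left h, max_eq_right (neg_nonpos.mpr h)]
    have hpne : p ≠ 0 := by
      intro h0
      have : p i = 0 := congrFun h0 i
      have : max (x i) 0 = 0 := this
      have hxi : (0:ℝ) < x i := hpos
      rw [max_eq_left hxi.le] at this
      exact absurd this hxi.ne'
    have hkey : 0 ≤ p ⬝ᵥ A.mulVec p := by
      have hpeq : p = fun k => x k + m k := by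
        funext k; rw [hxpm k]; ring
      have h1 : p ⬝ᵥ A.mulVec p = p ⬝ᵥ A.mulVec x + p ⬝ᵥ A.mulVec m := by
        rw [hpeq]
        rw [show (fun k => x k + m k) = x + m from rfl, Matrix.mulVec_add,
          dotProduct_add]
      have h2 : 0 ≤ p ⬝ᵥ A.mulVec x := by
        rw [hcol j]
        have : p ⬝ᵥ (fun k => (1 : Matrix n n ℝ) k j) = p j := by
          simp [dotProduct, Matrix.one_apply]
        rw [this]
        exact hp0 j
      have h3 : 0 ≤ p ⬝ᵥ A.mulVec m := by
        simp only [dotProduct, Matrix.mulVec]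
        apply Finset.sum_nonneg
        intro k _
        rw [Finset.mul_sum]
        apply Finset.sum_nonneg
        intro l _
        rcases eq_or_ne l k with rfl | hne
        · have : p l * (A l l * m l) = A l l * (p l * m l) := by ring
          rw [this, hpm l, mul_zero]
        · exact mul_nonneg (hp0 k) (mul_nonneg (hoff k l (Ne.symm hne)) (hm0 l))
      rw [h1]; exact add_nonneg h2 h3
    exact absurd (hneg p hpne) (not_lt.2 hkey)
  have hrow : ∀ i j, ∑ k, C i k * A k j = (1 : Matrix n n ℝ) i j := by
    intro i j; rw [← Matrix.mul_apply, hCA]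
  have hCdiag : ∀ i, C i i < 0 := by
    intro i
    have h1 : ∑ k, C i k * A k i = 1 := by rw [hrow i i, Matrix.one_apply_eq]
    have h2 : ∑ k ∈ Finset.univ.erase i, C i k * A k i ≤ 0 :=
      Finset.sum_nonpos fun k hk =>
        mul_nonpos_iff.2 (Or.inr ⟨hCle i k, hoff k i (Finset.ne_of_mem_erase hk)⟩)
    have h3 : C i i * A i i + ∑ k ∈ Finset.univ.erase i, C i k * A k i = 1 := by
      rw [← h1, Finset.add_sum_erase Finset.univ (fun k => C i k * A k i) (Finset.mem_univ i)]
    nlinarith [hCle i i, hdiag i]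
  have hstep : ∀ j i k, j ≠ i → k ≠ i → C j k < 0 → 0 < A k i → C j i < 0 := by
    intro j i k hji hki hCjk hAki
    have h1 : ∑ m, C j m * A m i = 0 := by rw [hrow j i, Matrix.one_apply_ne hji]
    have h2 : C j i * A i i + ∑ m ∈ Finset.univ.erase i, C j m * A m i = 0 := by
      rw [← h1, Finset.add_sum_erase Finset.univ (fun m => C j m * A m i) (Finset.mem_univ i)]
    have h3 : C j k * A k i + ∑ m ∈ (Finset.univ.erase i).erase k, C j m * A m i
        = ∑ m ∈ Finset.univ.erase i, C j m * A m i :=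
      Finset.add_sum_erase _ (fun m => C j m * A m i) (Finset.mem_erase.2 ⟨hki, Finset.mem_univ k⟩)
    have h4 : ∑ m ∈ (Finset.univ.erase i).erase k, C j m * A m i ≤ 0 :=
      Finset.sum_nonpos fun m hm =>
        mul_nonpos_iff.2 (Or.inr ⟨hCle j m,
          hoff m i (Finset.ne_of_mem_erase (Finset.mem_of_mem_erase hm))⟩)
    have h5 : C j k * A k i < 0 := mul_neg_of_neg_of_pos hCjk hAki
    nlinarith [hCle j i, hdiag i]
  have hfwd : ∀ i j, Γ.Reachable i j → C i j < 0 := by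
    intro i j h
    obtain ⟨w⟩ := h
    induction w with
    | nil => exact hCdiag _
    | @cons a b c hab p ih =>
      rw [hΓ, SimpleGraph.fromRel_adj] at hab
      obtain ⟨hne, hor⟩ := hab
      have hAba : 0 < A b a := by
        rcases hor with h' | h'
        · rw [hsA]; exact h'
        · exact h'
      rcases eq_or_ne a c with rfl | hac
      · exact hCdiag a
      · have hCcb : C c b < 0 := (hCsymm b c) ▸ ih
        have := hstep c a b (Ne.symm hac) (Ne.symm hne) hCcb hAba
        rw [hCsymm]; exact this
  have hbwd : ∀ i j, ¬Γ.Reachable i j → C i j = 0 := by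
    intro i j hnr
    set y : n → ℝ := fun k => if Γ.Reachable i k then C k j else 0 with hy
    have hblock : ∀ k l, Γ.Reachable i k → ¬Γ.Reachable i l → A k l = 0 := by
      intro k l hk hl
      have hkl : k ≠ l := by rintro rfl; exact hl hk
      have hadj : ¬Γ.Adj k l := fun h =>
        hl (hk.trans ⟨SimpleGraph.Walk.cons h SimpleGraph.Walk.nil⟩)
      rw [hΓ, SimpleGraph.fromRel_adj] at hadj
      push_neg at hadj
      exact le_antisymm (hadj hkl).1 (hoff k l hkl)
    have hy0 : A.mulVec y = 0 := by
      funext k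
      simp only [Matrix.mulVec, dotProduct, Pi.zero_apply]
      by_cases hk : Γ.Reachable i k
      · have heq : ∀ l, A k l * y l = A k l * C l j := by
          intro l
          by_cases hl : Γ.Reachable i l
          · simp [hy, hl]
          · simp [hblock k l hk hl]
        calc ∑ l, A k l * y l = ∑ l, A k l * C l j :=
              Finset.sum_congr rfl fun l _ => heq l
          _ = (A * C) k j := (Matrix.mul_apply).symm
          _ = (1 : Matrix n n ℝ) k j := by rw [hAC]
          _ = 0 := Matrix.one_apply_ne (by rintro rfl; exact hnr hk)
      · apply Finset.sum_eq_zero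
        intro l _
        by_cases hl : Γ.Reachable i l
        · rw [hsA l k, hblock l k hl hk, zero_mul]
        · simp [hy, hl]
    have hyz : y = 0 := by
      by_contra hne
      have := hneg y hne
      rw [hy0] at this
      simp at this
    have hyi : y i = 0 := congrFun hyz i
    simpa [hy, SimpleGraph.Reachable.refl] using hyi
  intro i j
  constructor
  · intro h
    by_contra hr
    exact h (hbwd i j hr)
  · intro h
    exact (hfwd i j h).ne
end

section
/- If A is a Lanner system, then its graph (the simple graph on the index set with an edge between i ≠ j iff A i j > 0) is connected. -/
open Matrix

lemma quadForm {n : Type*} [Fintype n] (M : Matrix n n ℝ) (x : n → ℝ) :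
    x ⬝ᵥ M.mulVec x = ∑ v, ∑ w, x v * M v w * x w := by
  simp [dotProduct, mulVec, Finset.mul_sum, mul_assoc]

/-- The graph of a Lanner system is connected. -/
theorem lanner_graph_connected {V : Type*} [Fintype V] [DecidableEq V]
    (A : Matrix V V ℤ) (hsys : IsSystem A) (hlan : IsLanner A) :
    (sysGraph A).Connected := by
  classical
  obtain ⟨hne, hsymm, hdiag, hoff, _⟩ := hsys
  obtain ⟨hhyp, hsub⟩ := hlan
  rw [SimpleGraph.connected_iff]
  refine ⟨fun i j => ?_, hne⟩
  by_contra hij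
  set G := sysGraph A with hG
  set s : Finset V := Finset.univ.filter (fun v => G.Reachable i v) with hs
  have his : i ∈ s := by
    simp only [hs, Finset.mem_filter, Finset.mem_univ, true_and]
    exact SimpleGraph.Reachable.refl i
  have hjs : j ∉ s := by simp [hs]; exact hij
  have hsne : s ≠ Finset.univ := fun h => hjs (h ▸ Finset.mem_univ j)
  have hcne : sᶜ ≠ Finset.univ := by
    intro h
    exact Finset.mem_compl.mp (h ▸ Finset.mem_univ i) his
  have key : ∀ v ∈ s, ∀ w, w ∉ s → A v w = 0 ∧ A w v = 0 := by
    intro v hv w hw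
    have hvw : v ≠ w := fun h => hw (h ▸ hv)
    have hadj : ¬ G.Adj v w := by
      intro h
      apply hw
      have hrv : G.Reachable i v := by simpa [hs] using hv
      simp only [hs, Finset.mem_filter, Finset.mem_univ, true_and]
      exact hrv.trans h.reachable
    rw [hG, sysGraph, SimpleGraph.fromRel_adj] at hadj
    push_neg at hadj
    have := hadj hvw
    constructor
    · exact le_antisymm this.1 (hoff v w hvw)
    · exact le_antisymm this.2 (hoff w v hvw.symm)
  -- the quadratic form restricted to a proper subset is ≤ 0
  have hquad : ∀ t : Finset V, t ≠ Finset.univ → ∀ x : V → ℝ,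
      ∑ v ∈ t, ∑ w ∈ t, x v * (A v w : ℝ) * x w ≤ 0 := by
    intro t ht x
    have := hsub t ht (fun v => x v.val)
    rw [quadForm] at this
    calc ∑ v ∈ t, ∑ w ∈ t, x v * (A v w : ℝ) * x w
        = ∑ v : {a // a ∈ t}, ∑ w : {a // a ∈ t},
            x v.val * (matReal (subMat A t) v w) * x w.val := by
          rw [← Finset.sum_coe_sort t]
          refine Finset.sum_congr rfl fun v _ => ?_
          rw [← Finset.sum_coe_sort t]
          refine Finset.sum_congr rfl fun w _ => ?_
          simp [matReal, subMat]
      _ ≤ 0 := this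
  obtain ⟨x, hx⟩ := not_forall.mp hhyp
  push_neg at hx
  rw [quadForm] at hx
  have hx' : (0:ℝ) < ∑ v, ∑ w, x v * (matReal A v w) * x w := hx
  have hsplit : ∑ v, ∑ w, x v * (matReal A v w) * x w =
      (∑ v ∈ s, ∑ w ∈ s, x v * (A v w : ℝ) * x w) +
      (∑ v ∈ sᶜ, ∑ w ∈ sᶜ, x v * (A v w : ℝ) * x w) := by
    have hmr : ∀ v w, matReal A v w = (A v w : ℝ) := fun v w => rfl
    simp only [hmr]
    rw [← Finset.sum_add_sum_compl s (fun v => ∑ w, x v * (A v w : ℝ) * x w)]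
    have h1 : ∀ v ∈ s, ∑ w, x v * (A v w : ℝ) * x w
        = ∑ w ∈ s, x v * (A v w : ℝ) * x w := by
      intro v hv
      rw [← Finset.sum_add_sum_compl s (fun w => x v * (A v w : ℝ) * x w)]
      have : ∑ w ∈ sᶜ, x v * (A v w : ℝ) * x w = 0 := by
        refine Finset.sum_eq_zero fun w hw => ?_
        have := (key v hv w (Finset.mem_compl.mp hw)).1
        simp [this]
      rw [this, add_zero]
    have h2 : ∀ v ∈ sᶜ, ∑ w, x v * (A v w : ℝ) * x w
        = ∑ w ∈ sᶜ, x v * (A v w : ℝ) * x w := by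
      intro v hv
      rw [← Finset.sum_add_sum_compl s (fun w => x v * (A v w : ℝ) * x w)]
      have : ∑ w ∈ s, x v * (A v w : ℝ) * x w = 0 := by
        refine Finset.sum_eq_zero fun w hw => ?_
        have := (key w hw v (Finset.mem_compl.mp hv)).2
        simp [this]
      rw [this, zero_add]
    rw [Finset.sum_congr rfl h1, Finset.sum_congr rfl h2]
  rw [hsplit] at hx'
  have q1 := hquad s hsne x
  have q2 := hquad sᶜ hcne x
  linarith
end

section
/- Let A be a system and let s₁, s₂ be disjoint nonempty subsets of the index set such that for each k ∈ {1,2} the principal submatrix of A on s_k is not negative semidefinite over ℝ while every proper principal submatrix of it is negative semidefinite (i.e. s₁ and s₂ induce Lanner subsystems). Then s₁ and s₂ are connected by an edge: there exist i ∈ s₁ and j ∈ s₂ with A i j ≥ 1. -/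
open Matrix

section Aux

lemma quad_eq {n : Type*} [Fintype n] [DecidableEq n] {A : Matrix n n ℝ} (hA : A.IsHermitian)
    (x y : n → ℝ) :
    x ⬝ᵥ A *ᵥ y = ∑ i, hA.eigenvalues i *
      ((star (hA.eigenvectorUnitary : Matrix n n ℝ)) *ᵥ x) i *
      ((star (hA.eigenvectorUnitary : Matrix n n ℝ)) *ᵥ y) i := by
  set U : Matrix n n ℝ := (hA.eigenvectorUnitary : Matrix n n ℝ) with hU
  have hstar : star U = Uᵀ := by
    rw [Matrix.star_eq_conjTranspose, conjTranspose_eq_transpose_of_trivial]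
  conv_lhs => rw [hA.spectral_theorem, Unitary.conjStarAlgAut_apply]
  rw [← hU, Matrix.mul_assoc, ← mulVec_mulVec, ← mulVec_mulVec, dotProduct_mulVec,
    ← mulVec_transpose, ← hstar]
  simp [dotProduct, mulVec_diagonal, mul_comm, mul_assoc, mul_left_comm]

lemma no_two_pos {n : Type*} [Fintype n] [DecidableEq n] {A : Matrix n n ℝ}
    (hA : A.IsHermitian) (hcard : Fintype.card {i // 0 < hA.eigenvalues i} ≤ 1)
    (x y : n → ℝ) (hx : 0 < x ⬝ᵥ A *ᵥ x) (hy : 0 < y ⬝ᵥ A *ᵥ y)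
    (hxy : x ⬝ᵥ A *ᵥ y = 0) (hyx : y ⬝ᵥ A *ᵥ x = 0) : False := by
  classical
  set μ := hA.eigenvalues with hμ
  set c : (n → ℝ) → (n → ℝ) := fun v => (star (hA.eigenvectorUnitary : Matrix n n ℝ)) *ᵥ v with hc
  -- case: all eigenvalues nonpositive
  by_cases hpos : ∃ i₀, 0 < μ i₀
  · obtain ⟨i₀, hi₀⟩ := hpos
    have huniq : ∀ i, i ≠ i₀ → μ i ≤ 0 := by
      intro i hi
      by_contra h
      push_neg at h
      have := Fintype.card_le_one_iff.mp hcard ⟨i, h⟩ ⟨i₀, hi₀⟩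
      exact hi (congrArg Subtype.val this)
    have key : ∀ v : n → ℝ, c v i₀ = 0 → v ⬝ᵥ A *ᵥ v ≤ 0 := by
      intro v hv
      rw [quad_eq hA]
      apply Finset.sum_nonpos
      intro i _
      rcases eq_or_ne i i₀ with rfl | hi
      · rw [show ((star (hA.eigenvectorUnitary : Matrix n n ℝ)) *ᵥ v) i = c v i from rfl, hv]
        ring_nf; simp
      · have h1 : μ i ≤ 0 := huniq i hi
        have : μ i * ((c v i)*(c v i)) ≤ 0 := mul_nonpos_of_nonpos_of_nonneg h1 (mul_self_nonneg _)
        calc μ i * _ * _ = μ i * ((c v i)*(c v i)) := by ring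
        _ ≤ 0 := this
    set a := c y i₀ with ha
    set b := c x i₀ with hb
    set z : n → ℝ := a • x - b • y with hz
    have hcz : c z i₀ = 0 := by
      simp only [hz, hc, Matrix.mulVec_sub, Matrix.mulVec_smul, Pi.sub_apply, Pi.smul_apply,
        smul_eq_mul]
      show a * b - b * a = 0
      ring
    have hQz : z ⬝ᵥ A *ᵥ z = a^2 * (x ⬝ᵥ A *ᵥ x) + b^2 * (y ⬝ᵥ A *ᵥ y)
        - a*b*(x ⬝ᵥ A *ᵥ y) - a*b*(y ⬝ᵥ A *ᵥ x) := by
      simp only [hz, Matrix.mulVec_sub, Matrix.mulVec_smul, dotProduct_sub, sub_dotProduct,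
        smul_dotProduct, dotProduct_smul, smul_eq_mul]
      ring
    have ha0 : a ≠ 0 := by
      intro h
      have := key y h
      linarith
    have hb0 : b ≠ 0 := by
      intro h
      have := key x h
      linarith
    have h1 : z ⬝ᵥ A *ᵥ z ≤ 0 := key z hcz
    have h2 : 0 < z ⬝ᵥ A *ᵥ z := by
      rw [hQz, hxy, hyx]
      nlinarith [pow_pos (abs_pos.mpr ha0) 2, sq_abs a, sq_abs b, pow_pos (abs_pos.mpr hb0) 2]
    linarith
  · push_neg at hpos
    have : x ⬝ᵥ A *ᵥ x ≤ 0 := by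
      rw [quad_eq hA]
      apply Finset.sum_nonpos
      intro i _
      calc μ i * _ * _ = μ i * ((c x i)*(c x i)) := by ring
      _ ≤ 0 := mul_nonpos_of_nonpos_of_nonneg (hpos i) (mul_self_nonneg _)
    linarith

private lemma sum_eq_sum_subtype {V : Type*} [Fintype V] (s : Finset V) (f : V → ℝ)
    (hf : ∀ i ∉ s, f i = 0) : ∑ i, f i = ∑ i : {i // i ∈ s}, f i := by
  rw [Finset.sum_coe_sort s f]
  exact (Finset.sum_subset (Finset.subset_univ s) (fun i _ hi => hf i hi)).symm

private lemma quad_restrict_s16 {V : Type*} [Fintype V] [DecidableEq V] (M : Matrix V V ℝ)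
    (s : Finset V) (w : {i // i ∈ s} → ℝ) :
    (fun i => if h : i ∈ s then w ⟨i, h⟩ else 0) ⬝ᵥ
        M *ᵥ (fun i => if h : i ∈ s then w ⟨i, h⟩ else 0)
      = w ⬝ᵥ (M.submatrix Subtype.val Subtype.val) *ᵥ w := by
  simp only [dotProduct, mulVec, submatrix_apply]
  rw [sum_eq_sum_subtype s _ (fun i hi => by simp [dif_neg hi])]
  apply Finset.sum_congr rfl
  intro i _
  rw [dif_pos i.2]
  congr 1
  rw [sum_eq_sum_subtype s _ (fun j hj => by simp [dif_neg hj])]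
  apply Finset.sum_congr rfl
  intro j _
  rw [dif_pos j.2]

private lemma cross_zero {V : Type*} [Fintype V] (M : Matrix V V ℝ) (s₁ s₂ : Finset V)
    (x y : V → ℝ) (hx : ∀ i ∉ s₁, x i = 0) (hy : ∀ j ∉ s₂, y j = 0)
    (hM : ∀ i ∈ s₁, ∀ j ∈ s₂, M i j = 0) : x ⬝ᵥ M *ᵥ y = 0 := by
  simp only [dotProduct, mulVec]
  apply Finset.sum_eq_zero
  intro i _
  by_cases hi : i ∈ s₁
  · have : ∑ j, M i j * y j = 0 := by
      apply Finset.sum_eq_zero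
      intro j _
      by_cases hj : j ∈ s₂
      · rw [hM i hi j hj, zero_mul]
      · rw [hy j hj, mul_zero]
    rw [this, mul_zero]
  · rw [hx i hi, zero_mul]

end Aux

/-- Two disjoint Lanner subsystems of a system are connected by an edge: there are
`i ∈ s₁` and `j ∈ s₂` with `A i j ≥ 1`. -/
theorem lanner_subsystems_joined {V : Type*} [Fintype V] [DecidableEq V]
    (A : Matrix V V ℤ) (hsys : IsSystem A)
    (s₁ s₂ : Finset V) (hdisj : Disjoint s₁ s₂)
    (hne₁ : s₁.Nonempty) (hne₂ : s₂.Nonempty)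
    (h₁ : ¬ NegSemidefMat (matReal (subMat A s₁)) ∧
      ∀ t : Finset V, t ⊂ s₁ → NegSemidefMat (matReal (subMat A t)))
    (h₂ : ¬ NegSemidefMat (matReal (subMat A s₂)) ∧
      ∀ t : Finset V, t ⊂ s₂ → NegSemidefMat (matReal (subMat A t))) :
    ∃ i ∈ s₁, ∃ j ∈ s₂, 1 ≤ A i j := by
  obtain ⟨-, hsymm, -, hoff, hH, hcard⟩ := hsys
  by_contra hcon
  push_neg at hcon
  -- all cross entries are zero
  have hzero : ∀ i ∈ s₁, ∀ j ∈ s₂, A i j = 0 := by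
    intro i hi j hj
    have hne : i ≠ j := fun h => (Finset.disjoint_left.mp hdisj hi) (h ▸ hj)
    have := hoff i j hne
    have := hcon i hi j hj
    omega
  obtain ⟨w₁, hw₁⟩ : ∃ w, 0 < w ⬝ᵥ (matReal (subMat A s₁)) *ᵥ w := by
    by_contra h; push_neg at h; exact h₁.1 (fun v => h v)
  obtain ⟨w₂, hw₂⟩ : ∃ w, 0 < w ⬝ᵥ (matReal (subMat A s₂)) *ᵥ w := by
    by_contra h; push_neg at h; exact h₂.1 (fun v => h v)
  set x : V → ℝ := fun i => if h : i ∈ s₁ then w₁ ⟨i, h⟩ else 0 with hxdef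
  set y : V → ℝ := fun i => if h : i ∈ s₂ then w₂ ⟨i, h⟩ else 0 with hydef
  have hx : 0 < x ⬝ᵥ (matReal A) *ᵥ x := by
    rw [hxdef, quad_restrict_s16]; exact hw₁
  have hy : 0 < y ⬝ᵥ (matReal A) *ᵥ y := by
    rw [hydef, quad_restrict_s16]; exact hw₂
  have hxy : x ⬝ᵥ (matReal A) *ᵥ y = 0 := by
    apply cross_zero (matReal A) s₁ s₂ x y
    · intro i hi; simp [hxdef, dif_neg hi]
    · intro j hj; simp [hydef, dif_neg hj]
    · intro i hi j hj
      show ((A i j : ℤ) : ℝ) = 0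
      rw [hzero i hi j hj]; norm_num
  have hyx : y ⬝ᵥ (matReal A) *ᵥ x = 0 := by
    apply cross_zero (matReal A) s₂ s₁ y x
    · intro j hj; simp [hydef, dif_neg hj]
    · intro i hi; simp [hxdef, dif_neg hi]
    · intro j hj i hi
      show ((A j i : ℤ) : ℝ) = 0
      rw [hsymm.apply i j, hzero i hi j hj]; norm_num
  exact no_two_pos hH hcard x y hx hy hxy hyx
end

section
/- Let A be a connected parabolic system of size n ≥ 2. Then every proper subsystem of A is elliptic: for every nonempty proper subset s ⊊ Fin n, the principal submatrix of A on s is negative definite over ℝ. -/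
open Matrix

/-- Every proper subsystem of a connected parabolic system of size `n ≥ 2` is elliptic. -/
theorem connParabolic_proper_subsystems_elliptic {n : ℕ} (hn : 2 ≤ n)
    (A : Matrix (Fin n) (Fin n) ℤ) (hsys : IsSystem A) (hpar : IsConnParabolic A) :
    ∀ s : Finset (Fin n), s.Nonempty → s ≠ Finset.univ →
      NegDefMat (matReal (subMat A s)) := by
  classical
  obtain ⟨-, hsymm, hdiag, hoff, -⟩ := hsys
  obtain ⟨hnsd, -, hconn⟩ := hpar
  intro s hs hsne x hx
  set B := matReal A with hBdef
  have hBherm : B.IsHermitian := by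
    ext i j
    simp only [hBdef, matReal, Matrix.conjTranspose_apply, Matrix.map_apply, star_trivial]
    have h := congrFun (congrFun hsymm i) j
    rw [Matrix.transpose_apply] at h
    exact_mod_cast h
  have expand : ∀ (m : ℕ) (M : Matrix (Fin m) (Fin m) ℝ) (y : Fin m → ℝ),
      y ⬝ᵥ M.mulVec y = ∑ i, ∑ j, y i * (M i j * y j) := by
    intro m M y
    simp [dotProduct, Matrix.mulVec, Finset.mul_sum]
  set x' : Fin n → ℝ := fun i => if h : i ∈ s then x ⟨i, h⟩ else 0 with hx'def
  -- the quadratic forms agree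
  have hq : x ⬝ᵥ (matReal (subMat A s)).mulVec x = x' ⬝ᵥ B.mulVec x' := by
    have h1 : x' ⬝ᵥ B.mulVec x' = ∑ i, ∑ j, x' i * (B i j * x' j) := by
      simp [dotProduct, Matrix.mulVec, Finset.mul_sum]
    have h2 : x ⬝ᵥ (matReal (subMat A s)).mulVec x
        = ∑ i : {i // i ∈ s}, ∑ j : {i // i ∈ s},
            x i * ((A i.val j.val : ℝ) * x j) := by
      simp [dotProduct, Matrix.mulVec, Finset.mul_sum, matReal, subMat]
    rw [h1, h2]
    rw [← Finset.sum_subset s.subset_univ (by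
      intro i _ hi
      simp [hx'def, hi])]
    have : ∀ i ∈ s, (∑ j, x' i * (B i j * x' j))
        = ∑ j ∈ s, x' i * (B i j * x' j) := by
      intro i _
      rw [← Finset.sum_subset s.subset_univ (by
        intro j _ hj
        simp [hx'def, hj])]
    rw [Finset.sum_congr rfl this]
    rw [← Finset.sum_attach s (fun i => ∑ j ∈ s, x' i * (B i j * x' j))]
    rw [Finset.univ_eq_attach]
    refine Finset.sum_congr rfl fun i _ => ?_
    rw [← Finset.sum_attach s (fun j => x' i.val * (B i.val j * x' j))]
    refine Finset.sum_congr rfl fun j _ => ?_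
    simp [hx'def, hBdef, matReal, i.prop, j.prop]
  by_contra hcon
  push_neg at hcon
  have hq0 : x' ⬝ᵥ B.mulVec x' = 0 := le_antisymm (hnsd x') (hq ▸ hcon)
  -- pass to absolute values
  set y : Fin n → ℝ := fun i => |x' i| with hydef
  have hterm : ∀ i j : Fin n, x' i * (B i j * x' j) ≤ y i * (B i j * y j) := by
    intro i j
    rcases eq_or_ne i j with rfl | hne
    · apply le_of_eq
      have : y i * (B i i * y i) = B i i * (|x' i| * |x' i|) := by ring
      rw [this, abs_mul_abs_self]
      ring
    · have hB0 : (0 : ℝ) ≤ B i j := by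
        simp only [hBdef, matReal, Matrix.map_apply]
        exact_mod_cast hoff i j hne
      have h1 : x' i * x' j ≤ y i * y j := by
        rw [hydef]
        calc x' i * x' j ≤ |x' i * x' j| := le_abs_self _
          _ = |x' i| * |x' j| := abs_mul _ _
      calc x' i * (B i j * x' j) = B i j * (x' i * x' j) := by ring
        _ ≤ B i j * (y i * y j) := by exact mul_le_mul_of_nonneg_left h1 hB0
        _ = y i * (B i j * y j) := by ring
  have hqy0 : y ⬝ᵥ B.mulVec y = 0 := by
    refine le_antisymm (hnsd y) ?_
    rw [expand n B y]
    rw [expand n B x'] at hq0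
    rw [← hq0]
    exact Finset.sum_le_sum fun i _ => Finset.sum_le_sum fun j _ => hterm i j
  -- y is a null vector of B
  have hpsd : (-B).PosSemidef := by
    refine Matrix.PosSemidef.of_dotProduct_mulVec_nonneg ?_ ?_
    · exact hBherm.neg
    · intro z
      simp only [star_trivial, RCLike.re_to_real]
      have := hnsd z
      simp only [Matrix.neg_mulVec, dotProduct_neg]
      linarith
  have hnull : B.mulVec y = 0 := by
    have h := (hpsd.dotProduct_mulVec_zero_iff y).mp (by
      simp only [star_trivial, Matrix.neg_mulVec, dotProduct_neg, hqy0, neg_zero])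
    have := congrArg Neg.neg h
    simpa [Matrix.neg_mulVec] using this
  have hynn : ∀ i, 0 ≤ y i := fun i => abs_nonneg _
  -- zero propagation along edges
  have prop : ∀ i j : Fin n, (sysGraph A).Adj i j → y i = 0 → y j = 0 := by
    intro i j hadj hyi
    have hBij : 0 < B i j := by
      have : 0 < A i j := by
        rcases hadj.2 with h | h
        · exact h
        · have hT := congrFun (congrFun hsymm j) i
          rw [Matrix.transpose_apply] at hT
          rw [hT]; exact h
      simp only [hBdef, matReal, Matrix.map_apply]
      exact_mod_cast this
    have hi0 : (B.mulVec y) i = 0 := by rw [hnull]; rfl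
    have hsum : ∑ k ∈ Finset.univ.erase i, B i k * y k = 0 := by
      have : (B.mulVec y) i = ∑ k, B i k * y k := by
        simp [Matrix.mulVec, dotProduct]
      rw [this] at hi0
      rw [← Finset.add_sum_erase _ _ (Finset.mem_univ i)] at hi0
      rw [hyi, mul_zero, zero_add] at hi0
      exact hi0
    have hnn : ∀ k ∈ Finset.univ.erase i, 0 ≤ B i k * y k := by
      intro k hk
      have hki : k ≠ i := (Finset.mem_erase.mp hk).1
      have : (0 : ℝ) ≤ B i k := by
        simp only [hBdef, matReal, Matrix.map_apply]
        exact_mod_cast hoff i k (Ne.symm hki)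
      exact mul_nonneg this (hynn k)
    have hjz : B i j * y j = 0 :=
      (Finset.sum_eq_zero_iff_of_nonneg hnn).mp hsum j
        (Finset.mem_erase.mpr ⟨hadj.ne.symm, Finset.mem_univ j⟩)
    rcases mul_eq_zero.mp hjz with h | h
    · exact absurd h (ne_of_gt hBij)
    · exact h
  have reachzero : ∀ {i j : Fin n}, (sysGraph A).Walk i j → y i = 0 → y j = 0 := by
    intro i j w
    induction w with
    | nil => exact id
    | cons hadj _ ih => exact fun h0 => ih (prop _ _ hadj h0)
  -- contradiction: y vanishes outside s but is nonzero somewhere in s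
  obtain ⟨i₀, hi₀⟩ : ∃ i, i ∉ s := by
    by_contra h
    push_neg at h
    exact hsne (Finset.eq_univ_iff_forall.mpr h)
  have hyi₀ : y i₀ = 0 := by simp [hydef, hx'def, hi₀]
  obtain ⟨i₁, hi₁⟩ : ∃ i, x i ≠ 0 := Function.ne_iff.mp hx
  have hyi₁ : y i₁.val ≠ 0 := by
    simp only [hydef, hx'def, dif_pos i₁.prop, abs_ne_zero]
    simpa using hi₁
  obtain ⟨w⟩ := hconn.preconnected i₀ i₁.val
  exact hyi₁ (reachzero w hyi₀)
end
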